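/- arXiv:1811.02153 — 4 statements merged into one kernel-verified Lean document; each statement's English description precedes it below -/
import Mathlib

section
/- Let t₁ < t₂ be real numbers and let p, q₁, q₂ : [t₁,t₂] → ℝ be continuous with p(t) > 0 for all t ∈ [t₁,t₂] and q₁(t) > q₂(t) for all t ∈ (t₁,t₂). Suppose there exists a nontrivial solution y of (p(t)y'(t))' + q₂(t)y(t) = 0 on (t₁,t₂) with y(t₁) = 0 = y(t₂). Then every real solution x of (p(t)x'(t))' + q₁(t)x(t) = 0 has at least one zero in the open interval (t₁,t₂). -/
open Set Filter Topology

/-- `x` is a solution of `(p(t) x'(t))' + q(t) x(t) = 0` on `[t₁, t₂]`: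
`x` is continuously differentiable on `[t₁,t₂]`, `t ↦ p(t) x'(t)` is continuously
differentiable on `[t₁,t₂]`, and the equation holds for all `t ∈ [t₁,t₂]`. -/
def IsODESolution (t₁ t₂ : ℝ) (p q x : ℝ → ℝ) : Prop :=
  ContDiffOn ℝ 1 x (Set.Icc t₁ t₂) ∧
  ContDiffOn ℝ 1 (fun t => p t * derivWithin x (Set.Icc t₁ t₂) t) (Set.Icc t₁ t₂) ∧
  ∀ t ∈ Set.Icc t₁ t₂,
    derivWithin (fun τ => p τ * derivWithin x (Set.Icc t₁ t₂) τ) (Set.Icc t₁ t₂) t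
      + q t * x t = 0

/-- Negation of a solution is a solution. -/
lemma IsODESolution.neg' (t₁ t₂ : ℝ) (ht : t₁ < t₂) (p q x : ℝ → ℝ)
    (hx : IsODESolution t₁ t₂ p q x) : IsODESolution t₁ t₂ p q (fun t => -x t) := by
  obtain ⟨h1, h2, h3⟩ := hx
  have hUD := uniqueDiffOn_Icc ht
  have hder : ∀ t ∈ Set.Icc t₁ t₂,
      derivWithin (fun s => -x s) (Set.Icc t₁ t₂) t = -derivWithin x (Set.Icc t₁ t₂) t :=
    fun t htm => derivWithin.neg
  have heq : Set.EqOn (fun τ => p τ * derivWithin (fun s => -x s) (Set.Icc t₁ t₂) τ)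
      (fun τ => -(p τ * derivWithin x (Set.Icc t₁ t₂) τ)) (Set.Icc t₁ t₂) := by
    intro t htm
    simp only [hder t htm, mul_neg]
  refine ⟨h1.neg, ?_, ?_⟩
  · exact h2.neg.congr heq
  · intro t htm
    rw [derivWithin_congr heq (heq htm), (show derivWithin (fun τ => -(p τ * derivWithin x (Set.Icc t₁ t₂) τ)) (Set.Icc t₁ t₂) t = -derivWithin (fun τ => p τ * derivWithin x (Set.Icc t₁ t₂) τ) (Set.Icc t₁ t₂) t from derivWithin.neg)]
    have := h3 t htm
    simp only [mul_neg]
    linarith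

/-- A continuous function without zeros on an interval has constant sign there. -/
lemma same_sign (t₁ t₂ u v : ℝ) (f : ℝ → ℝ) (hf : ContinuousOn f (Set.Icc t₁ t₂))
    (huv : Set.Ioo u v ⊆ Set.Icc t₁ t₂) (hne : ∀ r ∈ Set.Ioo u v, f r ≠ 0)
    {s t : ℝ} (hs : s ∈ Set.Ioo u v) (htm : t ∈ Set.Ioo u v) (hfs : 0 < f s) :
    0 < f t := by
  by_contra h
  push_neg at h
  have hft : f t < 0 := lt_of_le_of_ne h (hne t htm)
  have hsub : Set.uIcc t s ⊆ Set.Ioo u v :=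
    (Set.ordConnected_Ioo).uIcc_subset htm hs
  have hcont : ContinuousOn f (Set.uIcc t s) := hf.mono (hsub.trans huv)
  have h0 : (0 : ℝ) ∈ Set.uIcc (f t) (f s) := by
    rw [Set.mem_uIcc]; left; exact ⟨hft.le, hfs.le⟩
  obtain ⟨c, hc, hc0⟩ := intermediate_value_uIcc hcont h0
  exact hne c (hsub hc) hc0

/-- Core of Sturm's comparison theorem: the positive case. -/
lemma sturm_core (t₁ t₂ : ℝ) (p q₁ q₂ : ℝ → ℝ)
    (hppos : ∀ t ∈ Set.Icc t₁ t₂, 0 < p t)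
    (hqq : ∀ t ∈ Set.Ioo t₁ t₂, q₂ t < q₁ t)
    (x y : ℝ → ℝ)
    (hx : IsODESolution t₁ t₂ p q₁ x) (hy : IsODESolution t₁ t₂ p q₂ y)
    (a b : ℝ) (ha : a ∈ Set.Icc t₁ t₂) (hb : b ∈ Set.Icc t₁ t₂) (hab : a < b)
    (hya : y a = 0) (hyb : y b = 0)
    (hypos : ∀ t ∈ Set.Ioo a b, 0 < y t)
    (hxpos : ∀ t ∈ Set.Ioo a b, 0 < x t) : False := by
  obtain ⟨hx1, hx2, hx3⟩ := hx
  obtain ⟨hy1, hy2, hy3⟩ := hy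
  set I : Set ℝ := Set.Icc t₁ t₂ with hIdef
  set x' : ℝ → ℝ := derivWithin x I with hx'def
  set y' : ℝ → ℝ := derivWithin y I with hy'def
  set W : ℝ → ℝ := fun t => x t * (p t * y' t) - y t * (p t * x' t) with hWdef
  have hIcc_sub : Set.Icc a b ⊆ I := Set.Icc_subset_Icc ha.1 hb.2
  have hIoo_sub : Set.Ioo a b ⊆ Set.Ioo t₁ t₂ := Set.Ioo_subset_Ioo ha.1 hb.2
  -- continuity of W
  have hWc : ContinuousOn W (Set.Icc a b) := by
    apply ContinuousOn.sub
    · exact (hx1.continuousOn.mono hIcc_sub).mul (hy2.continuousOn.mono hIcc_sub)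
    · exact (hy1.continuousOn.mono hIcc_sub).mul (hx2.continuousOn.mono hIcc_sub)
  -- derivative of W on the interior
  have hWd : ∀ t ∈ Set.Ioo a b, HasDerivAt W ((q₁ t - q₂ t) * (x t * y t)) t := by
    intro t htm
    have htI : t ∈ I := hIcc_sub (Set.Ioo_subset_Icc_self htm)
    have hnhds : I ∈ 𝓝 t :=
      Icc_mem_nhds (lt_of_le_of_lt ha.1 htm.1) (lt_of_lt_of_le htm.2 hb.2)
    have hxD : HasDerivAt x (x' t) t :=
      ((hx1.differentiableOn one_ne_zero t htI).hasDerivWithinAt).hasDerivAt hnhds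
    have hyD : HasDerivAt y (y' t) t :=
      ((hy1.differentiableOn one_ne_zero t htI).hasDerivWithinAt).hasDerivAt hnhds
    have hpxD : HasDerivAt (fun τ => p τ * x' τ) (-(q₁ t * x t)) t := by
      have h1 := ((hx2.differentiableOn one_ne_zero t htI).hasDerivWithinAt).hasDerivAt hnhds
      have h2 : derivWithin (fun τ => p τ * x' τ) I t = -(q₁ t * x t) := by
        have := hx3 t htI; linarith
      rwa [h2] at h1
    have hpyD : HasDerivAt (fun τ => p τ * y' τ) (-(q₂ t * y t)) t := by
      have h1 := ((hy2.differentiableOn one_ne_zero t htI).hasDerivWithinAt).hasDerivAt hnhds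
      have h2 : derivWithin (fun τ => p τ * y' τ) I t = -(q₂ t * y t) := by
        have := hy3 t htI; linarith
      rwa [h2] at h1
    have h := (hxD.mul hpyD).sub (hyD.mul hpxD)
    refine h.congr_deriv ?_
    ring
  -- W is strictly monotone on [a,b]
  have hmono : StrictMonoOn W (Set.Icc a b) := by
    apply strictMonoOn_of_deriv_pos (convex_Icc a b) hWc
    intro t htm
    rw [interior_Icc] at htm
    rw [(hWd t htm).deriv]
    exact mul_pos (sub_pos.2 (hqq t (hIoo_sub htm))) (mul_pos (hxpos t htm) (hypos t htm))
  have hWab : W a < W b :=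
    hmono (Set.left_mem_Icc.2 hab.le) (Set.right_mem_Icc.2 hab.le) hab
  -- endpoint estimates
  haveI hNBa : (𝓝[Set.Ioo a b] a).NeBot := by
    apply mem_closure_iff_nhdsWithin_neBot.mp
    rw [closure_Ioo hab.ne]
    exact Set.left_mem_Icc.2 hab.le
  haveI hNBb : (𝓝[Set.Ioo a b] b).NeBot := by
    apply mem_closure_iff_nhdsWithin_neBot.mp
    rw [closure_Ioo hab.ne]
    exact Set.right_mem_Icc.2 hab.le
  have hxa : 0 ≤ x a := by
    have hc : Tendsto x (𝓝[Set.Ioo a b] a) (𝓝 (x a)) :=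
      ((hx1.continuousOn a ha).mono (hIoo_sub.trans Set.Ioo_subset_Icc_self)).tendsto
    exact ge_of_tendsto hc (eventually_of_mem self_mem_nhdsWithin fun t htm => (hxpos t htm).le)
  have hxb : 0 ≤ x b := by
    have hc : Tendsto x (𝓝[Set.Ioo a b] b) (𝓝 (x b)) :=
      ((hx1.continuousOn b hb).mono (hIoo_sub.trans Set.Ioo_subset_Icc_self)).tendsto
    exact ge_of_tendsto hc (eventually_of_mem self_mem_nhdsWithin fun t htm => (hxpos t htm).le)
  have hsuba : Set.Ioo a b ⊆ I \ {a} := fun t htm =>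
    ⟨hIcc_sub (Set.Ioo_subset_Icc_self htm), by simp [ne_of_gt htm.1]⟩
  have hsubb : Set.Ioo a b ⊆ I \ {b} := fun t htm =>
    ⟨hIcc_sub (Set.Ioo_subset_Icc_self htm), by simp [ne_of_lt htm.2]⟩
  have hy'a : 0 ≤ y' a := by
    have hyd : HasDerivWithinAt y (y' a) I a :=
      (hy1.differentiableOn one_ne_zero a ha).hasDerivWithinAt
    have hslope := hasDerivWithinAt_iff_tendsto_slope.mp hyd
    have h2 : Tendsto (slope y a) (𝓝[Set.Ioo a b] a) (𝓝 (y' a)) :=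
      hslope.mono_left (nhdsWithin_mono a hsuba)
    refine ge_of_tendsto h2 (eventually_of_mem self_mem_nhdsWithin fun t htm => ?_)
    rw [slope_def_field, hya, sub_zero]
    exact (div_pos (hypos t htm) (sub_pos.2 htm.1)).le
  have hy'b : y' b ≤ 0 := by
    have hyd : HasDerivWithinAt y (y' b) I b :=
      (hy1.differentiableOn one_ne_zero b hb).hasDerivWithinAt
    have hslope := hasDerivWithinAt_iff_tendsto_slope.mp hyd
    have h2 : Tendsto (slope y b) (𝓝[Set.Ioo a b] b) (𝓝 (y' b)) :=
      hslope.mono_left (nhdsWithin_mono b hsubb)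
    refine le_of_tendsto h2 (eventually_of_mem self_mem_nhdsWithin fun t htm => ?_)
    rw [slope_def_field, hyb, sub_zero]
    exact (div_neg_of_pos_of_neg (hypos t htm) (sub_neg.2 htm.2)).le
  have hWa : 0 ≤ W a := by
    have : W a = x a * (p a * y' a) := by simp [hWdef, hya]
    rw [this]
    exact mul_nonneg hxa (mul_nonneg (hppos a ha).le hy'a)
  have hWb : W b ≤ 0 := by
    have : W b = x b * (p b * y' b) := by simp [hWdef, hyb]
    rw [this]
    exact mul_nonpos_of_nonneg_of_nonpos hxb
      (mul_nonpos_of_nonneg_of_nonpos (hppos b hb).le hy'b)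
  linarith

/-- **Sturm's comparison theorem.** -/
theorem sturm_comparison
    (t₁ t₂ : ℝ) (ht : t₁ < t₂) (p q₁ q₂ : ℝ → ℝ)
    (hp : ContinuousOn p (Set.Icc t₁ t₂))
    (hq₁ : ContinuousOn q₁ (Set.Icc t₁ t₂))
    (hq₂ : ContinuousOn q₂ (Set.Icc t₁ t₂))
    (hppos : ∀ t ∈ Set.Icc t₁ t₂, 0 < p t)
    (hqq : ∀ t ∈ Set.Ioo t₁ t₂, q₂ t < q₁ t)
    (y : ℝ → ℝ) (hy : IsODESolution t₁ t₂ p q₂ y)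
    (hynt : ∃ t ∈ Set.Icc t₁ t₂, y t ≠ 0)
    (hy₁ : y t₁ = 0) (hy₂ : y t₂ = 0)
    (x : ℝ → ℝ) (hx : IsODESolution t₁ t₂ p q₁ x) :
    ∃ t ∈ Set.Ioo t₁ t₂, x t = 0 := by
  by_contra hcon
  push_neg at hcon
  have hxcont : ContinuousOn x (Set.Icc t₁ t₂) := hx.1.continuousOn
  have hycont : ContinuousOn y (Set.Icc t₁ t₂) := hy.1.continuousOn
  obtain ⟨ts, htsI, hyts⟩ := hynt
  have h1 : t₁ < ts := lt_of_le_of_ne htsI.1 (by rintro rfl; exact hyts hy₁)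
  have h2 : ts < t₂ := lt_of_le_of_ne htsI.2 (by rintro rfl; exact hyts hy₂)
  -- the largest zero of y below ts
  set A : Set ℝ := Set.Icc t₁ ts ∩ y ⁻¹' {0} with hAdef
  have hAclosed : IsClosed A :=
    (hycont.mono (Set.Icc_subset_Icc le_rfl h2.le)).preimage_isClosed_of_isClosed
      isClosed_Icc isClosed_singleton
  have hAne : A.Nonempty := ⟨t₁, ⟨le_rfl, h1.le⟩, hy₁⟩
  have hAbdd : BddAbove A := ⟨ts, fun t htA => htA.1.2⟩
  set a : ℝ := sSup A with hadef
  have haA : a ∈ A := hAclosed.csSup_mem hAne hAbdd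
  have ha1 : t₁ ≤ a := haA.1.1
  have ha2 : a ≤ ts := haA.1.2
  have hya : y a = 0 := haA.2
  have hats : a < ts := lt_of_le_of_ne ha2 (fun h => hyts (by rw [← h]; exact hya))
  have hY1 : ∀ t, a < t → t ≤ ts → y t ≠ 0 := by
    intro t h1' h2' h0
    exact absurd (le_csSup hAbdd ⟨⟨ha1.trans h1'.le, h2'⟩, h0⟩) (not_le.2 h1')
  -- the smallest zero of y above ts
  set B : Set ℝ := Set.Icc ts t₂ ∩ y ⁻¹' {0} with hBdef
  have hBclosed : IsClosed B :=
    (hycont.mono (Set.Icc_subset_Icc h1.le le_rfl)).preimage_isClosed_of_isClosed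
      isClosed_Icc isClosed_singleton
  have hBne : B.Nonempty := ⟨t₂, ⟨h2.le, le_rfl⟩, hy₂⟩
  have hBbdd : BddBelow B := ⟨ts, fun t htB => htB.1.1⟩
  set b : ℝ := sInf B with hbdef
  have hbB : b ∈ B := hBclosed.csInf_mem hBne hBbdd
  have hb1 : ts ≤ b := hbB.1.1
  have hb2 : b ≤ t₂ := hbB.1.2
  have hyb : y b = 0 := hbB.2
  have htsb : ts < b := lt_of_le_of_ne hb1 (fun h => hyts (by rw [h]; exact hyb))
  have hY2 : ∀ t, ts ≤ t → t < b → y t ≠ 0 := by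
    intro t h1' h2' h0
    exact absurd (csInf_le hBbdd ⟨⟨h1', h2'.le.trans hb2⟩, h0⟩) (not_le.2 h2')
  have hab : a < b := hats.trans htsb
  have haI : a ∈ Set.Icc t₁ t₂ := ⟨ha1, ha2.trans h2.le⟩
  have hbI : b ∈ Set.Icc t₁ t₂ := ⟨h1.le.trans hb1, hb2⟩
  have hIooab : Set.Ioo a b ⊆ Set.Icc t₁ t₂ := fun t htm =>
    ⟨ha1.trans htm.1.le, htm.2.le.trans hb2⟩
  have hIooab' : Set.Ioo a b ⊆ Set.Ioo t₁ t₂ := Set.Ioo_subset_Ioo ha1 hb2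
  have hyne : ∀ t ∈ Set.Ioo a b, y t ≠ 0 := by
    intro t htm
    rcases le_or_gt t ts with h | h
    · exact hY1 t htm.1 h
    · exact hY2 t h.le htm.2
  have htsab : ts ∈ Set.Ioo a b := ⟨hats, htsb⟩
  have hm : (t₁ + t₂) / 2 ∈ Set.Ioo t₁ t₂ := ⟨by linarith, by linarith⟩
  have hxm : x ((t₁ + t₂) / 2) ≠ 0 := hcon _ hm
  -- constant-sign versions of x and y
  have hxsub : Set.Ioo t₁ t₂ ⊆ Set.Icc t₁ t₂ := Set.Ioo_subset_Icc_self
  rcases hyts.lt_or_gt with hyneg | hypos'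
  · -- y ts < 0 : use -y
    have hYpos : ∀ t ∈ Set.Ioo a b, 0 < -y t := by
      intro t htm
      exact same_sign t₁ t₂ a b (fun s => -y s) hycont.neg hIooab
        (fun r hr e => hyne r hr (neg_eq_zero.mp e)) htsab htm (by simpa using neg_pos.mpr hyneg)
    rcases hxm.lt_or_gt with hxneg | hxpos'
    · -- x < 0 : use -x
      have hXpos : ∀ t ∈ Set.Ioo a b, 0 < -x t := by
        intro t htm
        exact same_sign t₁ t₂ t₁ t₂ (fun s => -x s) hxcont.neg hxsub
          (fun r hr e => hcon r hr (neg_eq_zero.mp e)) hm (hIooab' htm) (by simpa using neg_pos.mpr hxneg)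
      exact sturm_core t₁ t₂ p q₁ q₂ hppos hqq (fun s => -x s) (fun s => -y s)
        (IsODESolution.neg' t₁ t₂ ht p q₁ x hx) (IsODESolution.neg' t₁ t₂ ht p q₂ y hy) a b haI hbI hab (by simp [hya]) (by simp [hyb])
        hYpos hXpos
    · have hXpos : ∀ t ∈ Set.Ioo a b, 0 < x t := by
        intro t htm
        exact same_sign t₁ t₂ t₁ t₂ x hxcont hxsub hcon hm (hIooab' htm) hxpos'
      exact sturm_core t₁ t₂ p q₁ q₂ hppos hqq x (fun s => -y s)
        hx (IsODESolution.neg' t₁ t₂ ht p q₂ y hy) a b haI hbI hab (by simp [hya]) (by simp [hyb])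
        hYpos hXpos
  · -- y ts > 0
    have hYpos : ∀ t ∈ Set.Ioo a b, 0 < y t := by
      intro t htm
      exact same_sign t₁ t₂ a b y hycont hIooab hyne htsab htm hypos'
    rcases hxm.lt_or_gt with hxneg | hxpos'
    · have hXpos : ∀ t ∈ Set.Ioo a b, 0 < -x t := by
        intro t htm
        exact same_sign t₁ t₂ t₁ t₂ (fun s => -x s) hxcont.neg hxsub
          (fun r hr e => hcon r hr (neg_eq_zero.mp e)) hm (hIooab' htm) (by simpa using neg_pos.mpr hxneg)
      exact sturm_core t₁ t₂ p q₁ q₂ hppos hqq (fun s => -x s) y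
        (IsODESolution.neg' t₁ t₂ ht p q₁ x hx) hy a b haI hbI hab hya hyb hYpos hXpos
    · have hXpos : ∀ t ∈ Set.Ioo a b, 0 < x t := by
        intro t htm
        exact same_sign t₁ t₂ t₁ t₂ x hxcont hxsub hcon hm (hIooab' htm) hxpos'
      exact sturm_core t₁ t₂ p q₁ q₂ hppos hqq x y
        hx hy a b haI hbI hab hya hyb hYpos hXpos
end

section
/- Let t₁ < t₂ be real numbers and let p₁, p₂, q₁, q₂ : [t₁,t₂] → ℝ be continuous with p₂(t) ≥ p₁(t) > 0 for all t ∈ [t₁,t₂] and q₁(t) ≥ q₂(t) for all t ∈ (t₁,t₂). Suppose there exists a nontrivial solution y of (p₂(t)y'(t))' + q₂(t)y(t) = 0 on (t₁,t₂) with y(t₁) = 0 = y(t₂). Then every real solution x of (p₁(t)x'(t))' + q₁(t)x(t) = 0 which is not a constant multiple of y has at least one zero in the open interval (t₁,t₂). -/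
open Set Filter Topology

namespace SturmPicone

variable {t₁ t₂ : ℝ} {p q x : ℝ → ℝ}

lemma sol_cont (h : IsODESolution t₁ t₂ p q x) : ContinuousOn x (Icc t₁ t₂) :=
  h.1.continuousOn

lemma sol_deriv_cont (ht : t₁ < t₂) (h : IsODESolution t₁ t₂ p q x) :
    ContinuousOn (derivWithin x (Icc t₁ t₂)) (Icc t₁ t₂) :=
  h.1.continuousOn_derivWithin (uniqueDiffOn_Icc ht) le_rfl

lemma sol_hasDerivWithinAt (h : IsODESolution t₁ t₂ p q x) {t : ℝ}
    (htt : t ∈ Icc t₁ t₂) :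
    HasDerivWithinAt x (derivWithin x (Icc t₁ t₂) t) (Icc t₁ t₂) t :=
  ((h.1.differentiableOn one_ne_zero) t htt).hasDerivWithinAt

lemma sol_hasDerivAt (h : IsODESolution t₁ t₂ p q x) {t : ℝ}
    (htt : t ∈ Ioo t₁ t₂) : HasDerivAt x (derivWithin x (Icc t₁ t₂) t) t :=
  (sol_hasDerivWithinAt h (Ioo_subset_Icc_self htt)).hasDerivAt
    (Icc_mem_nhds htt.1 htt.2)

lemma solP_hasDerivWithinAt (h : IsODESolution t₁ t₂ p q x) {t : ℝ}
    (htt : t ∈ Icc t₁ t₂) :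
    HasDerivWithinAt (fun τ => p τ * derivWithin x (Set.Icc t₁ t₂) τ)
      (-(q t * x t)) (Icc t₁ t₂) t := by
  have h1 := ((h.2.1.differentiableOn one_ne_zero) t htt).hasDerivWithinAt
  have h2 := h.2.2 t htt
  rwa [eq_neg_of_add_eq_zero_left h2] at h1

lemma solP_hasDerivAt (h : IsODESolution t₁ t₂ p q x) {t : ℝ}
    (htt : t ∈ Ioo t₁ t₂) :
    HasDerivAt (fun τ => p τ * derivWithin x (Set.Icc t₁ t₂) τ) (-(q t * x t)) t :=
  (solP_hasDerivWithinAt h (Ioo_subset_Icc_self htt)).hasDerivAt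
    (Icc_mem_nhds htt.1 htt.2)

lemma eq_zero_of_deriv_zero (ht : t₁ < t₂) (hp : ContinuousOn p (Icc t₁ t₂))
    (hq : ContinuousOn q (Icc t₁ t₂)) (hppos : ∀ t ∈ Icc t₁ t₂, 0 < p t)
    (hx : IsODESolution t₁ t₂ p q x) {t₀ : ℝ} (ht₀ : t₀ ∈ Icc t₁ t₂)
    (h0 : x t₀ = 0) (h1 : derivWithin x (Icc t₁ t₂) t₀ = 0) :
    ∀ t ∈ Icc t₁ t₂, x t = 0 := by
  set π : ℝ → ℝ := fun t => max t₁ (min t t₂) with hπdef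
  have hπmem : ∀ t, π t ∈ Icc t₁ t₂ := fun t =>
    ⟨le_max_left _ _, max_le ht.le (min_le_right _ _)⟩
  have hπeq : ∀ t ∈ Icc t₁ t₂, π t = t := by
    intro t htt
    simp only [hπdef]
    rw [min_eq_left htt.2, max_eq_right htt.1]
  obtain ⟨a, haI, hmin⟩ := isCompact_Icc.exists_isMinOn (nonempty_Icc.2 ht.le) hp
  have hm0 : 0 < p a := hppos a haI
  obtain ⟨C, hC⟩ := isCompact_Icc.exists_bound_of_continuousOn hq
  set M : ℝ := max C 0 with hMdef
  have hM : ∀ t ∈ Icc t₁ t₂, |q t| ≤ M := fun t htt =>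
    le_trans (by simpa using hC t htt) (le_max_left _ _)
  set Kr : ℝ := max (p a)⁻¹ M with hKrdef
  have hKr0 : 0 ≤ Kr := le_trans (inv_nonneg.2 hm0.le) (le_max_left _ _)
  set K : NNReal := ⟨Kr, hKr0⟩ with hKdef
  set v : ℝ → ℝ × ℝ → ℝ × ℝ := fun t u => (u.2 / p (π t), -(q (π t) * u.1)) with hvdef
  have hlip : ∀ t, LipschitzOnWith K (v t) univ := by
    intro t
    apply LipschitzWith.lipschitzOnWith
    rw [lipschitzWith_iff_dist_le_mul]
    intro u w
    have hpm : p a ≤ p (π t) := hmin (hπmem t)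
    have hp0 : 0 < p (π t) := hppos _ (hπmem t)
    have hq' : |q (π t)| ≤ M := hM _ (hπmem t)
    have hK : (K : ℝ) = Kr := rfl
    rw [Prod.dist_eq, Prod.dist_eq, hK]
    apply max_le
    · have e1 : dist (v t u).1 (v t w).1 = |u.2 - w.2| / p (π t) := by
        simp only [hvdef, Real.dist_eq]
        rw [div_sub_div_same, abs_div, abs_of_pos hp0]
      rw [e1]
      calc |u.2 - w.2| / p (π t) ≤ |u.2 - w.2| / p a := by gcongr
        _ = (p a)⁻¹ * |u.2 - w.2| := by rw [div_eq_inv_mul]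
        _ ≤ Kr * (dist u.1 w.1 ⊔ dist u.2 w.2) := by
            apply mul_le_mul (le_max_left _ _) _ (abs_nonneg _) hKr0
            rw [Real.dist_eq]
            exact le_max_right _ _
    · have e1 : dist (v t u).2 (v t w).2 = |q (π t)| * |u.1 - w.1| := by
        simp only [hvdef, Real.dist_eq]
        rw [← abs_mul, ← abs_neg]
        congr 1
        ring
      rw [e1]
      apply mul_le_mul (hq'.trans (le_max_right _ _)) _ (abs_nonneg _) hKr0
      rw [Real.dist_eq]
      exact le_max_left _ _
  set F : ℝ → ℝ × ℝ := fun t => (x t, p t * derivWithin x (Set.Icc t₁ t₂) t) with hFdef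
  have hFc : ContinuousOn F (Icc t₁ t₂) := (hx.1.continuousOn).prodMk hx.2.1.continuousOn
  have hFd : ∀ t ∈ Icc t₁ t₂, HasDerivWithinAt F (v t (F t)) (Icc t₁ t₂) t := by
    intro t htt
    have hx1 := sol_hasDerivWithinAt hx htt
    have hx2 := solP_hasDerivWithinAt hx htt
    have hprod := hx1.prodMk hx2
    convert hprod using 1
    have hπt := hπeq t htt
    have hpne : p t ≠ 0 := (hppos t htt).ne'
    simp only [hvdef, hFdef, hπt]
    exact Prod.ext (mul_div_cancel_left₀ _ hpne) rfl
  have hGd : ∀ t (s : Set ℝ) (u : ℝ),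
      HasDerivWithinAt (fun _ : ℝ => ((0 : ℝ), (0 : ℝ))) (v t ((0 : ℝ), (0 : ℝ))) s u := by
    intro t s u
    have : v t ((0 : ℝ), (0 : ℝ)) = ((0 : ℝ), (0 : ℝ)) := by simp [hvdef]
    rw [this]
    exact hasDerivWithinAt_const _ _ _
  have hF₀ : F t₀ = ((0 : ℝ), (0 : ℝ)) := by
    simp only [hFdef, h0, h1, mul_zero]
  have hmemR : ∀ t, t₁ ≤ t → t < t₂ → Icc t₁ t₂ ∈ 𝓝[Ici t] t := by
    intro t h1' h2'
    exact mem_nhdsWithin.2 ⟨Iio t₂, isOpen_Iio, h2', fun s hs => ⟨h1'.trans hs.2, hs.1.le⟩⟩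
  have hmemL : ∀ t, t₁ < t → t ≤ t₂ → Icc t₁ t₂ ∈ 𝓝[Iic t] t := by
    intro t h1' h2'
    exact mem_nhdsWithin.2 ⟨Ioi t₁, isOpen_Ioi, h1', fun s hs => ⟨hs.1.le, hs.2.trans h2'⟩⟩
  have hright : EqOn F (fun _ => ((0 : ℝ), (0 : ℝ))) (Icc t₀ t₂) := by
    apply ODE_solution_unique_of_mem_Icc_right (s := fun _ => (univ : Set (ℝ × ℝ))) (fun t _ => hlip t)
      (hFc.mono (Icc_subset_Icc_left ht₀.1)) _ (fun _ _ => trivial) continuousOn_const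
      (fun t _ => hGd t _ t) (fun _ _ => trivial) hF₀
    intro t htI
    exact (hFd t ⟨ht₀.1.trans htI.1, htI.2.le⟩).mono_of_mem_nhdsWithin
      (hmemR t (ht₀.1.trans htI.1) htI.2)
  have hleft : EqOn F (fun _ => ((0 : ℝ), (0 : ℝ))) (Icc t₁ t₀) := by
    apply ODE_solution_unique_of_mem_Icc_left (s := fun _ => (univ : Set (ℝ × ℝ))) (fun t _ => hlip t)
      (hFc.mono (Icc_subset_Icc_right ht₀.2)) _ (fun _ _ => trivial) continuousOn_const
      (fun t _ => hGd t _ t) (fun _ _ => trivial) hF₀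
    intro t htI
    exact (hFd t ⟨htI.1.le, htI.2.trans ht₀.2⟩).mono_of_mem_nhdsWithin
      (hmemL t htI.1 (htI.2.trans ht₀.2))
  intro t htt
  rcases le_total t t₀ with h | h
  · have := hleft ⟨htt.1, h⟩
    exact congrArg Prod.fst this
  · have := hright ⟨h, htt.2⟩
    exact congrArg Prod.fst this


lemma tendsto_z (ht : t₁ < t₂) {p₁ p₂ q₁ q₂ y : ℝ → ℝ}
    (hy : IsODESolution t₁ t₂ p₂ q₂ y) (hx : IsODESolution t₁ t₂ p₁ q₁ x)
    (hxpos : ∀ t ∈ Ioo t₁ t₂, 0 < x t)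
    {e : ℝ} (he : e ∈ Icc t₁ t₂) (hee : e ∉ Ioo t₁ t₂) (hye : y e = 0)
    (hkey : x e ≠ 0 ∨ derivWithin x (Icc t₁ t₂) e ≠ 0) :
    Tendsto (fun t => y t * (p₂ t * derivWithin y (Set.Icc t₁ t₂) t)
      - y t ^ 2 / x t * (p₁ t * derivWithin x (Set.Icc t₁ t₂) t))
      (𝓝[Ioo t₁ t₂] e) (𝓝 0) := by
  have hsub : Ioo t₁ t₂ ⊆ Icc t₁ t₂ := Ioo_subset_Icc_self
  have hle : 𝓝[Ioo t₁ t₂] e ≤ 𝓝[Icc t₁ t₂] e := nhdsWithin_mono _ hsub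
  have hPyc : ContinuousWithinAt (fun t => p₂ t * derivWithin y (Set.Icc t₁ t₂) t)
      (Icc t₁ t₂) e := hy.2.1.continuousOn.continuousWithinAt he
  have hPxc : ContinuousWithinAt (fun t => p₁ t * derivWithin x (Set.Icc t₁ t₂) t)
      (Icc t₁ t₂) e := hx.2.1.continuousOn.continuousWithinAt he
  have hyc : ContinuousWithinAt y (Icc t₁ t₂) e := hy.1.continuousOn.continuousWithinAt he
  have hxc : ContinuousWithinAt x (Icc t₁ t₂) e := hx.1.continuousOn.continuousWithinAt he
  have hterm1 : Tendsto (fun t => y t * (p₂ t * derivWithin y (Set.Icc t₁ t₂) t))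
      (𝓝[Ioo t₁ t₂] e) (𝓝 0) := by
    have h := (hyc.mul hPyc).tendsto.mono_left hle
    simp [hye] at h
    exact h
  have hterm2 : Tendsto (fun t => y t ^ 2 / x t * (p₁ t * derivWithin x (Set.Icc t₁ t₂) t))
      (𝓝[Ioo t₁ t₂] e) (𝓝 0) := by
    by_cases hxe : x e = 0
    · have hde : derivWithin x (Icc t₁ t₂) e ≠ 0 := hkey.resolve_left (fun h => h hxe)
      have hle2 : 𝓝[Ioo t₁ t₂] e ≤ 𝓝[Icc t₁ t₂ \ {e}] e :=
        nhdsWithin_mono _ (fun s hs => ⟨hsub hs, fun hse => hee (mem_singleton_iff.1 hse ▸ hs)⟩)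
      have hslopey : Tendsto (fun t => y t / (t - e)) (𝓝[Ioo t₁ t₂] e)
          (𝓝 (derivWithin y (Set.Icc t₁ t₂) e)) := by
        have h := sol_hasDerivWithinAt hy he
        rw [hasDerivWithinAt_iff_tendsto_slope] at h
        apply (h.mono_left hle2).congr
        intro s
        simp [slope_def_field, hye]
      have hslopex : Tendsto (fun t => x t / (t - e)) (𝓝[Ioo t₁ t₂] e)
          (𝓝 (derivWithin x (Set.Icc t₁ t₂) e)) := by
        have h := sol_hasDerivWithinAt hx he
        rw [hasDerivWithinAt_iff_tendsto_slope] at h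
        apply (h.mono_left hle2).congr
        intro s
        simp [slope_def_field, hxe]
      have hid : Tendsto (fun t : ℝ => t - e) (𝓝[Ioo t₁ t₂] e) (𝓝 0) := by
        have h : Tendsto (fun t : ℝ => t - e) (𝓝 e) (𝓝 (e - e)) :=
          (continuous_id.sub continuous_const).tendsto e
        simpa using h.mono_left nhdsWithin_le_nhds
      have hq : Tendsto (fun t => (y t / (t - e)) ^ 2 / (x t / (t - e)) * (t - e))
          (𝓝[Ioo t₁ t₂] e)
          (𝓝 ((derivWithin y (Set.Icc t₁ t₂) e) ^ 2 / (derivWithin x (Set.Icc t₁ t₂) e) * 0)) :=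
        ((hslopey.pow 2).div hslopex hde).mul hid
      rw [mul_zero] at hq
      have heq : ∀ᶠ t in 𝓝[Ioo t₁ t₂] e,
          (y t / (t - e)) ^ 2 / (x t / (t - e)) * (t - e) = y t ^ 2 / x t := by
        filter_upwards [self_mem_nhdsWithin] with s hs
        have hs0 : s - e ≠ 0 := sub_ne_zero.2 (fun h => hee (h ▸ hs))
        have hxs : x s ≠ 0 := (hxpos s hs).ne'
        field_simp
      have h3 := hq.congr' heq
      have h4 := h3.mul (hPxc.tendsto.mono_left hle)
      simpa using h4
    · have h2 := (((hyc.pow 2).div hxc hxe).mul hPxc).tendsto.mono_left hle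
      simp [hye] at h2
      exact h2
  have h := hterm1.sub hterm2
  simpa using h


lemma key (ht : t₁ < t₂) {p₁ p₂ q₁ q₂ y x : ℝ → ℝ}
    (hp₁ : ContinuousOn p₁ (Icc t₁ t₂)) (hq₁ : ContinuousOn q₁ (Icc t₁ t₂))
    (hppos : ∀ t ∈ Icc t₁ t₂, 0 < p₁ t) (hpp : ∀ t ∈ Icc t₁ t₂, p₁ t ≤ p₂ t)
    (hqq : ∀ t ∈ Ioo t₁ t₂, q₂ t ≤ q₁ t)
    (hy : IsODESolution t₁ t₂ p₂ q₂ y)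
    (hynt : ∃ t ∈ Icc t₁ t₂, y t ≠ 0) (hy₁ : y t₁ = 0) (hy₂ : y t₂ = 0)
    (hx : IsODESolution t₁ t₂ p₁ q₁ x)
    (hxpos : ∀ t ∈ Ioo t₁ t₂, 0 < x t) :
    ∃ c : ℝ, ∀ t ∈ Icc t₁ t₂, x t = c * y t := by
  have hsub : Ioo t₁ t₂ ⊆ Icc t₁ t₂ := Ioo_subset_Icc_self
  set x' : ℝ → ℝ := derivWithin x (Set.Icc t₁ t₂) with hx'def
  set y' : ℝ → ℝ := derivWithin y (Set.Icc t₁ t₂) with hy'def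
  set z : ℝ → ℝ := fun t => y t * (p₂ t * y' t) - y t ^ 2 / x t * (p₁ t * x' t) with hzdef
  set G : ℝ → ℝ := fun t => (p₂ t - p₁ t) * y' t ^ 2 + (q₁ t - q₂ t) * y t ^ 2
      + p₁ t * (y' t - y t * x' t / x t) ^ 2 with hGdef
  have hzc : ContinuousOn z (Ioo t₁ t₂) := by
    apply ContinuousOn.sub
    · exact (hy.1.continuousOn.mono hsub).mul (hy.2.1.continuousOn.mono hsub)
    · exact (((hy.1.continuousOn.mono hsub).pow 2).div (hx.1.continuousOn.mono hsub)
        (fun t htt => (hxpos t htt).ne')).mul (hx.2.1.continuousOn.mono hsub)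
  have hzderiv : ∀ t ∈ Ioo t₁ t₂, HasDerivAt z (G t) t := by
    intro t htt
    have hxne : x t ≠ 0 := (hxpos t htt).ne'
    have hyd := sol_hasDerivAt hy htt
    have hxd := sol_hasDerivAt hx htt
    have hPyd := solP_hasDerivAt hy htt
    have hPxd := solP_hasDerivAt hx htt
    have h1 := hyd.mul hPyd
    have h2 := hyd.pow 2
    have h3 := h2.div hxd hxne
    have h4 := h3.mul hPxd
    have H := h1.sub h4
    refine H.congr_deriv ?_
    simp only [hGdef, Pi.pow_apply, Pi.div_apply]
    field_simp
    ring
  have hmono : MonotoneOn z (Ioo t₁ t₂) := by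
    apply monotoneOn_of_deriv_nonneg (convex_Ioo t₁ t₂) hzc
    · intro t htt
      rw [interior_Ioo] at htt
      exact ((hzderiv t htt).differentiableAt).differentiableWithinAt
    · intro t htt
      rw [interior_Ioo] at htt
      rw [(hzderiv t htt).deriv]
      have h1 : 0 ≤ (p₂ t - p₁ t) * y' t ^ 2 :=
        mul_nonneg (sub_nonneg.2 (hpp t (hsub htt))) (sq_nonneg _)
      have h2 : 0 ≤ (q₁ t - q₂ t) * y t ^ 2 :=
        mul_nonneg (sub_nonneg.2 (hqq t htt)) (sq_nonneg _)
      have h3 : 0 ≤ p₁ t * (y' t - y t * x' t / x t) ^ 2 :=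
        mul_nonneg (hppos t (hsub htt)).le (sq_nonneg _)
      simp only [hGdef]
      linarith
  have hmid : (t₁ + t₂) / 2 ∈ Ioo t₁ t₂ := ⟨by linarith, by linarith⟩
  have hkey1 : ∀ e ∈ Icc t₁ t₂, x e ≠ 0 ∨ x' e ≠ 0 := by
    intro e he
    by_cases h : x e = 0
    · right
      intro h'
      have h0 := eq_zero_of_deriv_zero ht hp₁ hq₁ hppos hx he h h'
      exact absurd (h0 _ (hsub hmid)) (hxpos _ hmid).ne'
    · exact Or.inl h
  have hnotIoo1 : t₁ ∉ Ioo t₁ t₂ := fun h => lt_irrefl _ h.1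
  have hnotIoo2 : t₂ ∉ Ioo t₁ t₂ := fun h => lt_irrefl _ h.2
  have hlim1 : Tendsto z (𝓝[Ioo t₁ t₂] t₁) (𝓝 0) :=
    tendsto_z ht hy hx hxpos (left_mem_Icc.2 ht.le) hnotIoo1 hy₁
      (hkey1 t₁ (left_mem_Icc.2 ht.le))
  have hlim2 : Tendsto z (𝓝[Ioo t₁ t₂] t₂) (𝓝 0) :=
    tendsto_z ht hy hx hxpos (right_mem_Icc.2 ht.le) hnotIoo2 hy₂
      (hkey1 t₂ (right_mem_Icc.2 ht.le))
  have hz0 : ∀ t ∈ Ioo t₁ t₂, z t = 0 := by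
    intro t htt
    have hnb1 : (𝓝[Ioo t₁ t] t₁).NeBot := by
      rw [nhdsWithin_Ioo_eq_nhdsGT htt.1]
      exact nhdsGT_neBot t₁
    have hnb2 : (𝓝[Ioo t t₂] t₂).NeBot := by
      rw [nhdsWithin_Ioo_eq_nhdsLT htt.2]
      infer_instance
    have hge : 0 ≤ z t := by
      apply le_of_tendsto (hlim1.mono_left (nhdsWithin_mono _ (Ioo_subset_Ioo_right htt.2.le)))
      filter_upwards [self_mem_nhdsWithin] with s hs
      exact hmono ⟨hs.1, hs.2.trans htt.2⟩ htt hs.2.le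
    have hle' : z t ≤ 0 := by
      apply ge_of_tendsto (hlim2.mono_left (nhdsWithin_mono _ (Ioo_subset_Ioo_left htt.1.le)))
      filter_upwards [self_mem_nhdsWithin] with s hs
      exact hmono htt ⟨htt.1.trans hs.1, hs.2⟩ hs.1.le
    linarith
  have hG0 : ∀ t ∈ Ioo t₁ t₂, G t = 0 := by
    intro t htt
    have hz' : HasDerivAt z 0 t := by
      have hev : z =ᶠ[𝓝 t] (fun _ => (0 : ℝ)) := by
        filter_upwards [isOpen_Ioo.mem_nhds htt] with s hs
        exact hz0 s hs
      exact (hasDerivAt_const t (0 : ℝ)).congr_of_eventuallyEq hev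
    exact (hzderiv t htt).unique hz'
  have hsq : ∀ t ∈ Ioo t₁ t₂, y' t - y t * x' t / x t = 0 := by
    intro t htt
    have h1 : 0 ≤ (p₂ t - p₁ t) * y' t ^ 2 :=
      mul_nonneg (sub_nonneg.2 (hpp t (hsub htt))) (sq_nonneg _)
    have h2 : 0 ≤ (q₁ t - q₂ t) * y t ^ 2 :=
      mul_nonneg (sub_nonneg.2 (hqq t htt)) (sq_nonneg _)
    have hG := hG0 t htt
    simp only [hGdef] at hG
    have h4 : p₁ t * (y' t - y t * x' t / x t) ^ 2 = 0 := by
      have h3 : 0 ≤ p₁ t * (y' t - y t * x' t / x t) ^ 2 :=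
        mul_nonneg (hppos t (hsub htt)).le (sq_nonneg _)
      linarith
    rcases mul_eq_zero.1 h4 with h | h
    · exact absurd h (hppos t (hsub htt)).ne'
    · exact pow_eq_zero_iff (by norm_num : (2 : ℕ) ≠ 0) |>.1 h
  set w : ℝ → ℝ := fun t => y t / x t with hwdef
  have hwd : ∀ t ∈ Ioo t₁ t₂, HasDerivAt w 0 t := by
    intro t htt
    have hxne : x t ≠ 0 := (hxpos t htt).ne'
    have h := (sol_hasDerivAt hy htt).div (sol_hasDerivAt hx htt) hxne
    have h5 := hsq t htt
    have hnum : y' t * x t - y t * x' t = 0 := by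
      field_simp at h5
      linarith
    rw [hnum, zero_div] at h
    exact h
  have hwconst : ∀ s ∈ Ioo t₁ t₂, ∀ u ∈ Ioo t₁ t₂, s < u → w u = w s := by
    intro s hs u hu hsu
    have hIcc : Icc s u ⊆ Ioo t₁ t₂ := fun r hr => ⟨hs.1.trans_le hr.1, hr.2.trans_lt hu.2⟩
    have hdiff : DifferentiableOn ℝ w (Icc s u) := fun r hr =>
      ((hwd r (hIcc hr)).differentiableAt).differentiableWithinAt
    have hderiv : ∀ r ∈ Ico s u, derivWithin w (Icc s u) r = 0 := by
      intro r hr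
      exact ((hwd r (hIcc (Ico_subset_Icc_self hr))).hasDerivWithinAt).derivWithin
        ((uniqueDiffOn_Icc hsu) r (Ico_subset_Icc_self hr))
    exact constant_of_derivWithin_zero hdiff hderiv u (right_mem_Icc.2 hsu.le)
  set c : ℝ := w ((t₁ + t₂) / 2) with hcdef
  have hyx : ∀ t ∈ Ioo t₁ t₂, y t = c * x t := by
    intro t htt
    have hwt : w t = c := by
      rcases lt_trichotomy t ((t₁ + t₂) / 2) with h | h | h
      · rw [hcdef]
        exact (hwconst t htt _ hmid h).symm
      · rw [h, hcdef]
      · rw [hcdef]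
        exact hwconst _ hmid t htt h
    have hxne : x t ≠ 0 := (hxpos t htt).ne'
    rw [← hwt]
    simp only [hwdef]
    field_simp
  have hnb1 : (𝓝[Ioo t₁ t₂] t₁).NeBot := by
    rw [nhdsWithin_Ioo_eq_nhdsGT ht]
    exact nhdsGT_neBot t₁
  have hnb2 : (𝓝[Ioo t₁ t₂] t₂).NeBot := by
    rw [nhdsWithin_Ioo_eq_nhdsLT ht]
    infer_instance
  have hcx : ∀ e ∈ Icc t₁ t₂, (𝓝[Ioo t₁ t₂] e).NeBot → y e = c * x e := by
    intro e he hnb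
    haveI := hnb
    have l1 : Tendsto y (𝓝[Ioo t₁ t₂] e) (𝓝 (y e)) :=
      (hy.1.continuousOn.continuousWithinAt he).tendsto.mono_left (nhdsWithin_mono _ hsub)
    have l2 : Tendsto (fun t => c * x t) (𝓝[Ioo t₁ t₂] e) (𝓝 (c * x e)) :=
      ((hx.1.continuousOn.continuousWithinAt he).tendsto.mono_left
        (nhdsWithin_mono _ hsub)).const_mul c
    have l3 : Tendsto (fun t => c * x t) (𝓝[Ioo t₁ t₂] e) (𝓝 (y e)) := by
      apply l1.congr'
      filter_upwards [self_mem_nhdsWithin] with s hs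
      exact hyx s hs
    exact tendsto_nhds_unique l3 l2
  have he1 : y t₁ = c * x t₁ := hcx t₁ (left_mem_Icc.2 ht.le) hnb1
  have he2 : y t₂ = c * x t₂ := hcx t₂ (right_mem_Icc.2 ht.le) hnb2
  have hc0 : c ≠ 0 := by
    intro hc
    obtain ⟨s, hsI, hsne⟩ := hynt
    apply hsne
    rcases eq_or_lt_of_le hsI.1 with h | h
    · rw [← h]; exact hy₁
    rcases eq_or_lt_of_le hsI.2 with h' | h'
    · rw [h']; exact hy₂
    · rw [hyx s ⟨h, h'⟩, hc, zero_mul]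
  refine ⟨c⁻¹, ?_⟩
  intro t htt
  by_cases hIo : t ∈ Ioo t₁ t₂
  · rw [hyx t hIo, inv_mul_cancel_left₀ hc0]
  · have hcase : t = t₁ ∨ t = t₂ := by
      rcases eq_or_lt_of_le htt.1 with h | h
      · exact Or.inl h.symm
      rcases eq_or_lt_of_le htt.2 with h' | h'
      · exact Or.inr h'
      · exact absurd ⟨h, h'⟩ hIo
    rcases hcase with h | h
    · have hx0 : x t₁ = 0 := by
        have h2 := he1
        rw [hy₁] at h2
        exact (mul_eq_zero.1 h2.symm).resolve_left hc0
      rw [h, hx0, hy₁, mul_zero]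
    · have hx0 : x t₂ = 0 := by
        have h2 := he2
        rw [hy₂] at h2
        exact (mul_eq_zero.1 h2.symm).resolve_left hc0
      rw [h, hx0, hy₂, mul_zero]

lemma sol_neg (ht : t₁ < t₂) (h : IsODESolution t₁ t₂ p q x) :
    IsODESolution t₁ t₂ p q (fun t => -x t) := by
  have hu := uniqueDiffOn_Icc ht
  have hd : ∀ s ∈ Set.Icc t₁ t₂, derivWithin (fun τ => -x τ) (Set.Icc t₁ t₂) s
      = -derivWithin x (Set.Icc t₁ t₂) s := fun s hs => derivWithin.fun_neg
  refine ⟨h.1.neg, ?_, ?_⟩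
  · apply (h.2.1.neg).congr
    intro s hs
    rw [hd s hs]
    ring
  · intro t htt
    have e1 : derivWithin (fun τ => p τ * derivWithin (fun τ' => -x τ') (Set.Icc t₁ t₂) τ)
        (Set.Icc t₁ t₂) t
        = derivWithin (fun τ => -(p τ * derivWithin x (Set.Icc t₁ t₂) τ)) (Set.Icc t₁ t₂) t := by
      apply derivWithin_congr
      · intro s hs
        simp only [hd s hs]
        ring
      · simp only [hd t htt]
        ring
    rw [e1, derivWithin.fun_neg]
    have h2 := h.2.2 t htt
    show -derivWithin (fun τ => p τ * derivWithin x (Set.Icc t₁ t₂) τ) (Set.Icc t₁ t₂) t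
      + q t * -x t = 0
    linarith

end SturmPicone

/-- **Sturm–Picone comparison theorem.** -/
theorem sturm_picone
    (t₁ t₂ : ℝ) (ht : t₁ < t₂) (p₁ p₂ q₁ q₂ : ℝ → ℝ)
    (hp₁ : ContinuousOn p₁ (Set.Icc t₁ t₂))
    (hp₂ : ContinuousOn p₂ (Set.Icc t₁ t₂))
    (hq₁ : ContinuousOn q₁ (Set.Icc t₁ t₂))
    (hq₂ : ContinuousOn q₂ (Set.Icc t₁ t₂))
    (hppos : ∀ t ∈ Set.Icc t₁ t₂, 0 < p₁ t)
    (hpp : ∀ t ∈ Set.Icc t₁ t₂, p₁ t ≤ p₂ t)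
    (hqq : ∀ t ∈ Set.Ioo t₁ t₂, q₂ t ≤ q₁ t)
    (y : ℝ → ℝ) (hy : IsODESolution t₁ t₂ p₂ q₂ y)
    (hynt : ∃ t ∈ Set.Icc t₁ t₂, y t ≠ 0)
    (hy₁ : y t₁ = 0) (hy₂ : y t₂ = 0)
    (x : ℝ → ℝ) (hx : IsODESolution t₁ t₂ p₁ q₁ x)
    (hxy : ¬ ∃ c : ℝ, ∀ t ∈ Set.Icc t₁ t₂, x t = c * y t) :
    ∃ t ∈ Set.Ioo t₁ t₂, x t = 0 := by
  by_contra hcon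
  push_neg at hcon
  have hmid : (t₁ + t₂) / 2 ∈ Set.Ioo t₁ t₂ := ⟨by linarith, by linarith⟩
  have hsign : ∀ a ∈ Set.Ioo t₁ t₂, ∀ b ∈ Set.Ioo t₁ t₂, x a < 0 → 0 < x b → False := by
    intro a ha b hb hxa hxb
    have hsub2 : Set.uIcc a b ⊆ Set.Ioo t₁ t₂ := Set.ordConnected_Ioo.uIcc_subset ha hb
    have hcont : ContinuousOn x (Set.uIcc a b) :=
      hx.1.continuousOn.mono (hsub2.trans Set.Ioo_subset_Icc_self)
    have h0 : (0 : ℝ) ∈ Set.uIcc (x a) (x b) := by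
      rw [Set.mem_uIcc]
      exact Or.inl ⟨hxa.le, hxb.le⟩
    obtain ⟨u, hu, hxu⟩ := intermediate_value_uIcc hcont h0
    exact hcon u (hsub2 hu) hxu
  rcases lt_or_gt_of_ne (hcon _ hmid) with hneg | hpos
  · have hall : ∀ t ∈ Set.Ioo t₁ t₂, 0 < -x t := by
      intro t htt
      rcases lt_or_gt_of_ne (hcon t htt) with h | h
      · linarith
      · exact (hsign _ hmid _ htt hneg h).elim
    obtain ⟨c, hc⟩ := SturmPicone.key ht hp₁ hq₁ hppos hpp hqq hy hynt hy₁ hy₂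
      (SturmPicone.sol_neg ht hx) hall
    refine hxy ⟨-c, fun t htt => ?_⟩
    have h2 := hc t htt
    linarith
  · have hall : ∀ t ∈ Set.Ioo t₁ t₂, 0 < x t := by
      intro t htt
      rcases lt_or_gt_of_ne (hcon t htt) with h | h
      · exact (hsign _ htt _ hmid h hpos).elim
      · exact h
    obtain ⟨c, hc⟩ := SturmPicone.key ht hp₁ hq₁ hppos hpp hqq hy hynt hy₁ hy₂ hx hall
    exact hxy ⟨c, hc⟩
end

section
/- Let t₁ < t₂ be real numbers and let p₁, p₂, q₁, q₂ : [t₁,t₂] → ℝ be continuous with p₁(t) > 0 and p₂(t) > 0 for all t ∈ [t₁,t₂]. Define the variation V(u) = ∫_{t₁}^{t₂} [(p₂(t) − p₁(t))(u'(t))² + (q₁(t) − q₂(t))(u(t))²] dt for u ∈ C¹[t₁,t₂]. Suppose there exists a nontrivial solution u of (p₂(t)u'(t))' + q₂(t)u(t) = 0 on (t₁,t₂) with u(t₁) = 0 = u(t₂) and V(u) ≥ 0. Then every real solution v of (p₁(t)v'(t))' + q₁(t)v(t) = 0 which is not a constant multiple of u has at least one zero in the open interval (t₁,t₂). -/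
open Set Filter MeasureTheory intervalIntegral

lemma my_ftc {a b : ℝ} (hab : a ≤ b) {f f' : ℝ → ℝ} (hc : ContinuousOn f (Set.Icc a b))
    (hd : ∀ x ∈ Set.Ioo a b, HasDerivAt f (f' x) x)
    (hi : ContinuousOn f' (Set.Icc a b)) :
    ∫ y in a..b, f' y = f b - f a :=
  intervalIntegral.integral_eq_sub_of_hasDeriv_right_of_le hab hc
    (fun x hx => (hd x hx).hasDerivWithinAt)
    ((by rwa [Set.uIcc_of_le hab] : ContinuousOn f' (Set.uIcc a b)).intervalIntegrable)

lemma pair_vanish_left {a b : ℝ} {y d : ℝ → ℝ × ℝ} {K : ℝ}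
    (hy : ContinuousOn y (Set.Icc a b))
    (hd : ∀ x ∈ Set.Ico a b, HasDerivWithinAt y (d x) (Set.Ici x) x)
    (hK : ∀ x ∈ Set.Ico a b, ‖d x‖ ≤ K * ‖y x‖)
    (h0 : y a = 0) : ∀ x ∈ Set.Icc a b, y x = 0 := by
  intro x hx
  have := norm_le_gronwallBound_of_norm_deriv_right_le (δ := 0) (ε := 0) hy hd
    (by simp [h0]) (fun s hs => by simpa using hK s hs) x hx
  rw [gronwallBound_ε0_δ0] at this
  exact norm_le_zero_iff.1 this

lemma pair_vanish_right {a b : ℝ} {y d : ℝ → ℝ × ℝ} {K : ℝ}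
    (hy : ContinuousOn y (Set.Icc a b))
    (hd : ∀ x ∈ Set.Ioc a b, HasDerivWithinAt y (d x) (Set.Iic x) x)
    (hK : ∀ x ∈ Set.Ioc a b, ‖d x‖ ≤ K * ‖y x‖)
    (h0 : y b = 0) : ∀ x ∈ Set.Icc a b, y x = 0 := by
  intro x hx
  set σ : ℝ → ℝ := fun s => a + b - s with hσ
  have hσmaps : Set.MapsTo σ (Set.Icc a b) (Set.Icc a b) := by
    intro s hs; constructor <;> simp only [hσ] <;> [linarith [hs.2]; linarith [hs.1]]
  have hyc : ContinuousOn (y ∘ σ) (Set.Icc a b) :=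
    hy.comp ((continuous_const.sub continuous_id).continuousOn) hσmaps
  have hyd : ∀ s ∈ Set.Ico a b, HasDerivWithinAt (y ∘ σ) ((-1 : ℝ) • d (σ s)) (Set.Ici s) s := by
    intro s hs
    have hσs : σ s ∈ Set.Ioc a b := by
      constructor <;> simp only [hσ] <;> [linarith [hs.2]; linarith [hs.1]]
    have hσd : HasDerivWithinAt σ (-1) (Set.Ici s) s := by
      simpa using ((hasDerivAt_id s).const_sub (a + b)).hasDerivWithinAt (s := Set.Ici s)
    exact HasDerivWithinAt.scomp s (hd (σ s) hσs) hσd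
      (fun t ht => by simp only [hσ] at *; simp only [Set.mem_Iic]; simp only [Set.mem_Ici] at ht; linarith)
  have hKy : ∀ s ∈ Set.Ico a b, ‖(-1 : ℝ) • d (σ s)‖ ≤ K * ‖(y ∘ σ) s‖ := by
    intro s hs
    have hσs : σ s ∈ Set.Ioc a b := by
      constructor <;> simp only [hσ] <;> [linarith [hs.2]; linarith [hs.1]]
    simpa using hK (σ s) hσs
  have h0' : (y ∘ σ) a = 0 := by simp only [Function.comp, hσ]; simpa using h0
  have hall := pair_vanish_left hyc hyd hKy h0'
  have hx' : σ x ∈ Set.Icc a b := hσmaps hx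
  have := hall (σ x) hx'
  simpa [Function.comp, hσ] using this



/-- The variation `V(u) = ∫_{t₁}^{t₂} [(p₂ - p₁)(u')² + (q₁ - q₂) u²] dt`. -/
noncomputable def variation (t₁ t₂ : ℝ) (p₁ p₂ q₁ q₂ u : ℝ → ℝ) : ℝ :=
  ∫ t in t₁..t₂,
    ((p₂ t - p₁ t) * (derivWithin u (Set.Icc t₁ t₂) t) ^ 2
      + (q₁ t - q₂ t) * (u t) ^ 2)

set_option maxHeartbeats 1000000 in
/-- **Leighton's comparison theorem.** -/
theorem leighton_comparison
    (t₁ t₂ : ℝ) (ht : t₁ < t₂) (p₁ p₂ q₁ q₂ : ℝ → ℝ)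
    (hp₁ : ContinuousOn p₁ (Set.Icc t₁ t₂))
    (hp₂ : ContinuousOn p₂ (Set.Icc t₁ t₂))
    (hq₁ : ContinuousOn q₁ (Set.Icc t₁ t₂))
    (hq₂ : ContinuousOn q₂ (Set.Icc t₁ t₂))
    (hp₁pos : ∀ t ∈ Set.Icc t₁ t₂, 0 < p₁ t)
    (hp₂pos : ∀ t ∈ Set.Icc t₁ t₂, 0 < p₂ t)
    (u : ℝ → ℝ) (hu : IsODESolution t₁ t₂ p₂ q₂ u)
    (hunt : ∃ t ∈ Set.Icc t₁ t₂, u t ≠ 0)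
    (hu₁ : u t₁ = 0) (hu₂ : u t₂ = 0)
    (hV : 0 ≤ variation t₁ t₂ p₁ p₂ q₁ q₂ u)
    (v : ℝ → ℝ) (hv : IsODESolution t₁ t₂ p₁ q₁ v)
    (hvu : ¬ ∃ c : ℝ, ∀ t ∈ Set.Icc t₁ t₂, v t = c * u t) :
    ∃ t ∈ Set.Ioo t₁ t₂, v t = 0 := by
  classical
  obtain ⟨hu1, hu2, hu3⟩ := hu
  obtain ⟨hv1, hv2, hv3⟩ := hv
  simp only [variation] at hV
  by_contra hcon
  push_neg at hcon
  have hle : t₁ ≤ t₂ := ht.le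
  have uD : UniqueDiffOn ℝ (Set.Icc t₁ t₂) := uniqueDiffOn_Icc ht
  set U : ℝ → ℝ := derivWithin u (Set.Icc t₁ t₂) with hUdef
  set W : ℝ → ℝ := derivWithin v (Set.Icc t₁ t₂) with hWdef
  set P : ℝ → ℝ := fun t => p₂ t * U t with hPdef
  set Q : ℝ → ℝ := fun t => p₁ t * W t with hQdef
  have hUc : ContinuousOn U (Set.Icc t₁ t₂) := hu1.continuousOn_derivWithin uD le_rfl
  have hWc : ContinuousOn W (Set.Icc t₁ t₂) := hv1.continuousOn_derivWithin uD le_rfl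
  have huc : ContinuousOn u (Set.Icc t₁ t₂) := hu1.continuousOn
  have hvc : ContinuousOn v (Set.Icc t₁ t₂) := hv1.continuousOn
  have hPc : ContinuousOn P (Set.Icc t₁ t₂) := hu2.continuousOn
  have hQc : ContinuousOn Q (Set.Icc t₁ t₂) := hv2.continuousOn
  have hud : ∀ t ∈ Set.Icc t₁ t₂, HasDerivWithinAt u (U t) (Set.Icc t₁ t₂) t :=
    fun t ht' => (hu1.differentiableOn one_ne_zero t ht').hasDerivWithinAt
  have hvd : ∀ t ∈ Set.Icc t₁ t₂, HasDerivWithinAt v (W t) (Set.Icc t₁ t₂) t :=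
    fun t ht' => (hv1.differentiableOn one_ne_zero t ht').hasDerivWithinAt
  have hPd : ∀ t ∈ Set.Icc t₁ t₂, HasDerivWithinAt P (-(q₂ t * u t)) (Set.Icc t₁ t₂) t := by
    intro t ht'
    have h1 := (hu2.differentiableOn one_ne_zero t ht').hasDerivWithinAt
    have h2 := hu3 t ht'
    have : derivWithin P (Set.Icc t₁ t₂) t = -(q₂ t * u t) := by linarith
    rwa [this] at h1
  have hQd : ∀ t ∈ Set.Icc t₁ t₂, HasDerivWithinAt Q (-(q₁ t * v t)) (Set.Icc t₁ t₂) t := by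
    intro t ht'
    have h1 := (hv2.differentiableOn one_ne_zero t ht').hasDerivWithinAt
    have h2 := hv3 t ht'
    have : derivWithin Q (Set.Icc t₁ t₂) t = -(q₁ t * v t) := by linarith
    rwa [this] at h1
  have hmem : ∀ x ∈ Set.Ioo t₁ t₂, Set.Icc t₁ t₂ ∈ nhds x := fun x hx => Icc_mem_nhds hx.1 hx.2
  have hudI : ∀ x ∈ Set.Ioo t₁ t₂, HasDerivAt u (U x) x :=
    fun x hx => (hud x (Set.Ioo_subset_Icc_self hx)).hasDerivAt (hmem x hx)
  have hvdI : ∀ x ∈ Set.Ioo t₁ t₂, HasDerivAt v (W x) x :=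
    fun x hx => (hvd x (Set.Ioo_subset_Icc_self hx)).hasDerivAt (hmem x hx)
  have hPdI : ∀ x ∈ Set.Ioo t₁ t₂, HasDerivAt P (-(q₂ x * u x)) x :=
    fun x hx => (hPd x (Set.Ioo_subset_Icc_self hx)).hasDerivAt (hmem x hx)
  have hQdI : ∀ x ∈ Set.Ioo t₁ t₂, HasDerivAt Q (-(q₁ x * v x)) x :=
    fun x hx => (hQd x (Set.Ioo_subset_Icc_self hx)).hasDerivAt (hmem x hx)
  -- Step A : ∫ (p₂ U² - q₂ u²) = 0
  have hcA : ContinuousOn (fun t => p₂ t * U t ^ 2 - q₂ t * u t ^ 2) (Set.Icc t₁ t₂) :=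
    (hp₂.mul (hUc.pow 2)).sub (hq₂.mul (huc.pow 2))
  have intA : ∫ t in t₁..t₂, (p₂ t * U t ^ 2 - q₂ t * u t ^ 2) = 0 := by
    have hder : ∀ x ∈ Set.Ioo t₁ t₂,
        HasDerivAt (fun t => P t * u t) (p₂ x * U x ^ 2 - q₂ x * u x ^ 2) x := by
      intro x hx
      have h1 := (hPdI x hx).mul (hudI x hx)
      refine h1.congr_deriv ?_
      simp only [hPdef]
      ring
    have := my_ftc hle (hPc.mul huc) hder hcA
    rw [this, Pi.mul_apply, Pi.mul_apply, hu₂, hu₁]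
    ring
  -- e = integrand of J
  set e : ℝ → ℝ := fun t => p₁ t * U t ^ 2 - q₁ t * u t ^ 2 with hedef
  have hec : ContinuousOn e (Set.Icc t₁ t₂) := (hp₁.mul (hUc.pow 2)).sub (hq₁.mul (huc.pow 2))
  have hintJ : IntervalIntegrable e volume t₁ t₂ :=
    (by rwa [Set.uIcc_of_le hle] : ContinuousOn e (Set.uIcc t₁ t₂)).intervalIntegrable
  have hintV : IntervalIntegrable
      (fun t => (p₂ t - p₁ t) * U t ^ 2 + (q₁ t - q₂ t) * u t ^ 2) volume t₁ t₂ := by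
    apply ContinuousOn.intervalIntegrable
    rw [Set.uIcc_of_le hle]
    exact ((hp₂.sub hp₁).mul (hUc.pow 2)).add ((hq₁.sub hq₂).mul (huc.pow 2))
  have hJle : (∫ t in t₁..t₂, e t) ≤ 0 := by
    have hsum : (∫ t in t₁..t₂, ((p₂ t - p₁ t) * U t ^ 2 + (q₁ t - q₂ t) * u t ^ 2)) +
        (∫ t in t₁..t₂, e t) = ∫ t in t₁..t₂, (p₂ t * U t ^ 2 - q₂ t * u t ^ 2) := by
      rw [← intervalIntegral.integral_add hintV hintJ]
      apply intervalIntegral.integral_congr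
      intro x _
      simp only [hedef]
      ring
    linarith
  
  -- bounds
  obtain ⟨tm, htm, hpm⟩ := isCompact_Icc.exists_isMinOn (Set.nonempty_Icc.2 hle) hp₁
  have hpmpos : 0 < p₁ tm := hp₁pos tm htm
  obtain ⟨Mq, hMq⟩ := isCompact_Icc.exists_bound_of_continuousOn hq₁
  obtain ⟨MU, hMU⟩ := isCompact_Icc.exists_bound_of_continuousOn hUc
  obtain ⟨MQ, hMQ⟩ := isCompact_Icc.exists_bound_of_continuousOn hQc
  obtain ⟨M, hM⟩ := isCompact_Icc.exists_bound_of_continuousOn hec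
  have hMU0 : 0 ≤ MU := le_trans (norm_nonneg _) (hMU t₁ ⟨le_rfl, hle⟩)
  have hMQ0 : 0 ≤ MQ := le_trans (norm_nonneg _) (hMQ t₁ ⟨le_rfl, hle⟩)
  set K : ℝ := max (p₁ tm)⁻¹ Mq with hKdef
  have hK0 : 0 ≤ K := le_trans (inv_nonneg.2 hpmpos.le) (le_max_left _ _)
  -- Lipschitz-type bound for the pair system
  have hKb : ∀ x ∈ Set.Icc t₁ t₂, ‖((W x, -(q₁ x * v x)) : ℝ × ℝ)‖ ≤ K * ‖((v x, Q x) : ℝ × ℝ)‖ := by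
    intro x hx
    have hpx : 0 < p₁ x := hp₁pos x hx
    have hpmx : p₁ tm ≤ p₁ x := hpm hx
    have e1 : |Q x| = p₁ x * |W x| := by
      simp only [hQdef]
      rw [abs_mul, abs_of_pos hpx]
    have h1 : |W x| ≤ K * (|v x| ⊔ |Q x|) := by
      have c1 : |W x| ≤ (p₁ tm)⁻¹ * |Q x| := by
        rw [e1, ← mul_assoc]
        have : 1 ≤ (p₁ tm)⁻¹ * p₁ x := by
          rw [inv_mul_eq_div, le_div_iff₀ hpmpos]
          linarith
        nlinarith [abs_nonneg (W x)]
      calc |W x| ≤ (p₁ tm)⁻¹ * |Q x| := c1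
        _ ≤ K * (|v x| ⊔ |Q x|) := by
          apply mul_le_mul (le_max_left _ _) (le_max_right _ _) (abs_nonneg _) hK0
    have h2 : |q₁ x * v x| ≤ K * (|v x| ⊔ |Q x|) := by
      have c1 : |q₁ x * v x| ≤ Mq * |v x| := by
        rw [abs_mul]
        apply mul_le_mul_of_nonneg_right _ (abs_nonneg _)
        simpa using hMq x hx
      calc |q₁ x * v x| ≤ Mq * |v x| := c1
        _ ≤ K * (|v x| ⊔ |Q x|) := by
          apply mul_le_mul (le_max_right _ _) (le_max_left _ _) (abs_nonneg _) hK0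
    rw [Prod.norm_def, Prod.norm_def]
    simp only [Real.norm_eq_abs, abs_neg]
    exact max_le h1 h2
  have hyc : ContinuousOn (fun t => ((v t, Q t) : ℝ × ℝ)) (Set.Icc t₁ t₂) := hvc.prodMk hQc
  -- Gronwall: v and W cannot both vanish at an endpoint
  have hvzero₁ : v t₁ = 0 → W t₁ = 0 → False := by
    intro hv0 hW0
    have hyd : ∀ x ∈ Set.Ico t₁ t₂, HasDerivWithinAt (fun t => ((v t, Q t) : ℝ × ℝ))
        ((W x, -(q₁ x * v x)) : ℝ × ℝ) (Set.Ici x) x := by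
      intro x hx
      have hxI : x ∈ Set.Icc t₁ t₂ := ⟨hx.1, hx.2.le⟩
      exact HasDerivWithinAt.mono_of_mem_nhdsWithin ((hvd x hxI).prodMk (hQd x hxI)) (Icc_mem_nhdsGE_of_mem hx)
    have h0 : ((v t₁, Q t₁) : ℝ × ℝ) = 0 := by
      simp [hQdef, hv0, hW0, Prod.ext_iff]
    have hall := pair_vanish_left hyc hyd (fun x hx => hKb x ⟨hx.1, hx.2.le⟩) h0
    apply hvu
    refine ⟨0, fun t ht' => ?_⟩
    have := congrArg Prod.fst (hall t ht')
    simpa using this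
  have hvzero₂ : v t₂ = 0 → W t₂ = 0 → False := by
    intro hv0 hW0
    have hyd : ∀ x ∈ Set.Ioc t₁ t₂, HasDerivWithinAt (fun t => ((v t, Q t) : ℝ × ℝ))
        ((W x, -(q₁ x * v x)) : ℝ × ℝ) (Set.Iic x) x := by
      intro x hx
      have hxI : x ∈ Set.Icc t₁ t₂ := ⟨hx.1.le, hx.2⟩
      exact HasDerivWithinAt.mono_of_mem_nhdsWithin ((hvd x hxI).prodMk (hQd x hxI)) (Icc_mem_nhdsLE_of_mem hx)
    have h0 : ((v t₂, Q t₂) : ℝ × ℝ) = 0 := by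
      simp [hQdef, hv0, hW0, Prod.ext_iff]
    have hall := pair_vanish_right hyc hyd (fun x hx => hKb x ⟨hx.1.le, hx.2⟩) h0
    apply hvu
    refine ⟨0, fun t ht' => ?_⟩
    have := congrArg Prod.fst (hall t ht')
    simpa using this
  
  -- the Picone functions
  set g : ℝ → ℝ := fun x => p₁ x * (U x * v x - u x * W x) ^ 2 / v x ^ 2 with hgdef
  set F : ℝ → ℝ := fun x => Q x * u x ^ 2 / v x with hFdef
  have hFd : ∀ x ∈ Set.Ioo t₁ t₂, HasDerivAt F (e x - g x) x := by
    intro x hx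
    have hvx : v x ≠ 0 := hcon x hx
    have hnum := (hQdI x hx).mul ((hudI x hx).pow 2)
    have h2 := hnum.div (hvdI x hx) hvx
    refine h2.congr_deriv ?_
    simp only [hedef, hgdef, hQdef, Pi.mul_apply, Pi.pow_apply]
    push_cast
    field_simp
    ring
  have hgnn : ∀ y ∈ Set.Icc t₁ t₂, 0 ≤ g y := fun y hy => by
    simp only [hgdef]
    exact div_nonneg (mul_nonneg (hp₁pos y hy).le (sq_nonneg _)) (sq_nonneg _)
  have hgca : ∀ y ∈ Set.Ioo t₁ t₂, ContinuousAt g y := by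
    intro y hy
    have hvy : v y ≠ 0 := hcon y hy
    have cp : ContinuousAt p₁ y := hp₁.continuousAt (hmem y hy)
    have cU : ContinuousAt U y := hUc.continuousAt (hmem y hy)
    have cW : ContinuousAt W y := hWc.continuousAt (hmem y hy)
    have cu : ContinuousAt u y := huc.continuousAt (hmem y hy)
    have cv : ContinuousAt v y := hvc.continuousAt (hmem y hy)
    exact (cp.mul (((cU.mul cv).sub (cu.mul cW)).pow 2)).div (cv.pow 2) (pow_ne_zero 2 hvy)
  -- FTC representations of u and v
  have hurep : ∀ x ∈ Set.Icc t₁ t₂, ∫ s in t₁..x, U s = u x := by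
    intro x hx
    have := intervalIntegral.integral_eq_sub_of_hasDeriv_right_of_le hx.1
      (huc.mono (Set.Icc_subset_Icc le_rfl hx.2))
      (fun s hs => ((hudI s ⟨hs.1, lt_of_lt_of_le hs.2 hx.2⟩).hasDerivWithinAt))
      (((hUc.mono (Set.Icc_subset_Icc le_rfl hx.2)).mono
        (by rw [Set.uIcc_of_le hx.1] : Set.uIcc t₁ x ⊆ Set.Icc t₁ x)).intervalIntegrable)
    rw [this, hu₁, sub_zero]
  have hvrep : ∀ x ∈ Set.Icc t₁ t₂, ∫ s in t₁..x, W s = v x - v t₁ := by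
    intro x hx
    exact intervalIntegral.integral_eq_sub_of_hasDeriv_right_of_le hx.1
      (hvc.mono (Set.Icc_subset_Icc le_rfl hx.2))
      (fun s hs => ((hvdI s ⟨hs.1, lt_of_lt_of_le hs.2 hx.2⟩).hasDerivWithinAt))
      (((hWc.mono (Set.Icc_subset_Icc le_rfl hx.2)).mono
        (by rw [Set.uIcc_of_le hx.1] : Set.uIcc t₁ x ⊆ Set.Icc t₁ x)).intervalIntegrable)
  have hurep2 : ∀ x ∈ Set.Icc t₁ t₂, ∫ s in x..t₂, U s = - u x := by
    intro x hx
    have := intervalIntegral.integral_eq_sub_of_hasDeriv_right_of_le hx.2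
      (huc.mono (Set.Icc_subset_Icc hx.1 le_rfl))
      (fun s hs => ((hudI s ⟨lt_of_le_of_lt hx.1 hs.1, hs.2⟩).hasDerivWithinAt))
      (((hUc.mono (Set.Icc_subset_Icc hx.1 le_rfl)).mono
        (by rw [Set.uIcc_of_le hx.2] : Set.uIcc x t₂ ⊆ Set.Icc x t₂)).intervalIntegrable)
    rw [this, hu₂, zero_sub]
  have hvrep2 : ∀ x ∈ Set.Icc t₁ t₂, ∫ s in x..t₂, W s = v t₂ - v x := by
    intro x hx
    exact intervalIntegral.integral_eq_sub_of_hasDeriv_right_of_le hx.2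
      (hvc.mono (Set.Icc_subset_Icc hx.1 le_rfl))
      (fun s hs => ((hvdI s ⟨lt_of_le_of_lt hx.1 hs.1, hs.2⟩).hasDerivWithinAt))
      (((hWc.mono (Set.Icc_subset_Icc hx.1 le_rfl)).mono
        (by rw [Set.uIcc_of_le hx.2] : Set.uIcc x t₂ ⊆ Set.Icc x t₂)).intervalIntegrable)
  have hubd : ∀ x ∈ Set.Icc t₁ t₂, |u x| ≤ MU * (x - t₁) := by
    intro x hx
    rw [← hurep x hx]
    have := intervalIntegral.norm_integral_le_of_norm_le_const (C := MU) (f := U)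
      (a := t₁) (b := x) (fun s hs => by
        rw [Set.uIoc_of_le hx.1] at hs
        exact hMU s ⟨hs.1.le, hs.2.trans hx.2⟩)
    rwa [Real.norm_eq_abs, abs_of_nonneg (by linarith [hx.1] : (0:ℝ) ≤ x - t₁)] at this
  have hubd2 : ∀ x ∈ Set.Icc t₁ t₂, |u x| ≤ MU * (t₂ - x) := by
    intro x hx
    have h0 : |u x| = ‖∫ s in x..t₂, U s‖ := by rw [hurep2 x hx]; simp [Real.norm_eq_abs]
    rw [h0]
    have := intervalIntegral.norm_integral_le_of_norm_le_const (C := MU) (f := U)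
      (a := x) (b := t₂) (fun s hs => by
        rw [Set.uIoc_of_le hx.2] at hs
        exact hMU s ⟨hx.1.trans hs.1.le, hs.2⟩)
    rwa [abs_of_nonneg (by linarith [hx.2] : (0:ℝ) ≤ t₂ - x)] at this
  -- Tendsto of F at t₁
  have hFt₁ : Filter.Tendsto F (nhdsWithin t₁ (Set.Ioi t₁)) (nhds 0) := by
    by_cases hv0 : v t₁ = 0
    · have hW₁ : W t₁ ≠ 0 := fun h => hvzero₁ hv0 h
      set κ : ℝ := |W t₁| / 2 with hκdef
      have hκpos : 0 < κ := div_pos (abs_pos.2 hW₁) two_pos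
      have hWct : ContinuousWithinAt W (Set.Icc t₁ t₂) t₁ := hWc t₁ ⟨le_rfl, hle⟩
      have hev : {s | |W s - W t₁| ≤ κ} ∈ nhdsWithin t₁ (Set.Icc t₁ t₂) := by
        have h1 := hWct (Metric.closedBall_mem_nhds (W t₁) hκpos)
        refine Filter.mem_of_superset h1 ?_
        intro s hs
        simp only [Set.mem_preimage, Metric.mem_closedBall, Real.dist_eq] at hs
        exact hs
      obtain ⟨r, hr, hrsub⟩ := Metric.mem_nhdsWithin_iff.1 hev
      have hevb : ∀ᶠ x in nhdsWithin t₁ (Set.Ioi t₁),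
          ‖F x‖ ≤ (MQ * MU ^ 2 / κ) * (x - t₁) := by
        filter_upwards [Ioc_mem_nhdsGT_of_mem
          (⟨le_rfl, lt_min (by linarith) ht⟩ : t₁ ∈ Set.Ico t₁ (min (t₁ + r / 2) t₂))] with x hx
        have hxr : x ≤ t₁ + r / 2 := (le_min_iff.1 hx.2).1
        have hxt₂ : x ≤ t₂ := (le_min_iff.1 hx.2).2
        have hxI : x ∈ Set.Icc t₁ t₂ := ⟨hx.1.le, hxt₂⟩
        have hWnear : ∀ s ∈ Set.Icc t₁ x, |W s - W t₁| ≤ κ := by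
          intro s hs
          apply hrsub
          constructor
          · rw [Metric.mem_ball, Real.dist_eq, abs_of_nonneg (by linarith [hs.1])]
            linarith [hs.2]
          · exact ⟨hs.1, hs.2.trans hxt₂⟩
        have hWint : IntervalIntegrable W volume t₁ x :=
          ((hWc.mono (Set.Icc_subset_Icc le_rfl hxt₂)).mono
            (by rw [Set.uIcc_of_le hx.1.le] : Set.uIcc t₁ x ⊆ Set.Icc t₁ x)).intervalIntegrable
        have hint1 : ∫ s in t₁..x, (W s - W t₁) = v x - (x - t₁) * W t₁ := by
          rw [intervalIntegral.integral_sub hWint intervalIntegrable_const,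
            intervalIntegral.integral_const, hvrep x hxI, hv0, smul_eq_mul]
          ring
        have hbnd : |v x - (x - t₁) * W t₁| ≤ κ * (x - t₁) := by
          rw [← hint1]
          have := intervalIntegral.norm_integral_le_of_norm_le_const (C := κ)
            (f := fun s => W s - W t₁) (a := t₁) (b := x) (fun s hs => by
              rw [Set.uIoc_of_le hx.1.le] at hs
              exact hWnear s ⟨hs.1.le, hs.2⟩)
          rwa [Real.norm_eq_abs, abs_of_nonneg (by linarith [hx.1.le] : (0:ℝ) ≤ x - t₁)] at this
        have hWt₁ : |W t₁| = 2 * κ := by rw [hκdef]; ring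
        have hlow : κ * (x - t₁) ≤ |v x| := by
          have h1 : |(x - t₁) * W t₁| - |v x| ≤ |(x - t₁) * W t₁ - v x| :=
            abs_sub_abs_le_abs_sub _ _
          rw [abs_sub_comm] at h1
          have h2 : |(x - t₁) * W t₁| = (x - t₁) * (2 * κ) := by
            rw [abs_mul, abs_of_nonneg (by linarith [hx.1.le] : (0:ℝ) ≤ x - t₁), hWt₁]
          nlinarith [hbnd, hx.1]
        have hvpos : 0 < |v x| := lt_of_lt_of_le (by nlinarith [hx.1]) hlow
        have hFabs : ‖F x‖ = |Q x| * |u x| ^ 2 / |v x| := by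
          simp only [hFdef, Real.norm_eq_abs, abs_div, abs_mul, abs_pow]
        rw [hFabs]
        calc |Q x| * |u x| ^ 2 / |v x| ≤ MQ * (MU * (x - t₁)) ^ 2 / (κ * (x - t₁)) := by
              apply div_le_div₀ (by positivity) ?_ (by nlinarith [hx.1]) hlow
              have b1 : |Q x| ≤ MQ := by simpa using hMQ x hxI
              have b2 : |u x| ^ 2 ≤ (MU * (x - t₁)) ^ 2 :=
                pow_le_pow_left₀ (abs_nonneg _) (hubd x hxI) 2
              exact mul_le_mul b1 b2 (by positivity) hMQ0
          _ = MQ * MU ^ 2 / κ * (x - t₁) := by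
              rw [div_eq_iff (ne_of_gt (by nlinarith [hx.1] : (0:ℝ) < κ * (x - t₁))),
                div_mul_eq_mul_div, div_mul_eq_mul_div, eq_div_iff (ne_of_gt hκpos)]
              ring
      have htd : Filter.Tendsto (fun x => (MQ * MU ^ 2 / κ) * (x - t₁))
          (nhdsWithin t₁ (Set.Ioi t₁)) (nhds 0) := by
        have hc : Continuous fun x : ℝ => (MQ * MU ^ 2 / κ) * (x - t₁) :=
          continuous_const.mul (continuous_id.sub continuous_const)
        have := (hc.tendsto t₁).mono_left (nhdsWithin_le_nhds (s := Set.Ioi t₁))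
        simpa using this
      exact squeeze_zero_norm' hevb htd
    · have hmemI : t₁ ∈ Set.Icc t₁ t₂ := ⟨le_rfl, hle⟩
      have h1 : ContinuousWithinAt (fun x => Q x * u x ^ 2) (Set.Icc t₁ t₂) t₁ :=
        ((hQc t₁ hmemI).mul ((huc t₁ hmemI).pow 2))
      have hFcw : ContinuousWithinAt F (Set.Icc t₁ t₂) t₁ := h1.div (hvc t₁ hmemI) hv0
      have hF0 : F t₁ = 0 := by simp [hFdef, hu₁]
      have ht' := hFcw.tendsto
      rw [hF0] at ht'
      have hle' : nhdsWithin t₁ (Set.Ioi t₁) ≤ nhdsWithin t₁ (Set.Icc t₁ t₂) := by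
        rw [← nhdsWithin_Ioc_eq_nhdsGT ht]
        exact nhdsWithin_mono t₁ Set.Ioc_subset_Icc_self
      exact ht'.mono_left hle'
  
  -- Tendsto of F at t₂
  have hFt₂ : Filter.Tendsto F (nhdsWithin t₂ (Set.Iio t₂)) (nhds 0) := by
    by_cases hv0 : v t₂ = 0
    · have hW₂ : W t₂ ≠ 0 := fun h => hvzero₂ hv0 h
      set κ : ℝ := |W t₂| / 2 with hκdef
      have hκpos : 0 < κ := div_pos (abs_pos.2 hW₂) two_pos
      have hWct : ContinuousWithinAt W (Set.Icc t₁ t₂) t₂ := hWc t₂ ⟨hle, le_rfl⟩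
      have hev : {s | |W s - W t₂| ≤ κ} ∈ nhdsWithin t₂ (Set.Icc t₁ t₂) := by
        have h1 := hWct (Metric.closedBall_mem_nhds (W t₂) hκpos)
        refine Filter.mem_of_superset h1 ?_
        intro s hs
        simp only [Set.mem_preimage, Metric.mem_closedBall, Real.dist_eq] at hs
        exact hs
      obtain ⟨r, hr, hrsub⟩ := Metric.mem_nhdsWithin_iff.1 hev
      have hevb : ∀ᶠ x in nhdsWithin t₂ (Set.Iio t₂),
          ‖F x‖ ≤ (MQ * MU ^ 2 / κ) * (t₂ - x) := by
        filter_upwards [Ico_mem_nhdsLT_of_mem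
          (⟨max_lt (by linarith) ht, le_rfl⟩ : t₂ ∈ Set.Ioc (max (t₂ - r / 2) t₁) t₂)] with x hx
        have hxr : t₂ - r / 2 ≤ x := le_trans (le_max_left _ _) hx.1
        have hxt₁ : t₁ ≤ x := le_trans (le_max_right _ _) hx.1
        have hxI : x ∈ Set.Icc t₁ t₂ := ⟨hxt₁, hx.2.le⟩
        have hWnear : ∀ s ∈ Set.Icc x t₂, |W s - W t₂| ≤ κ := by
          intro s hs
          apply hrsub
          constructor
          · rw [Metric.mem_ball, Real.dist_eq, abs_of_nonpos (by linarith [hs.2])]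
            linarith [hs.1]
          · exact ⟨hxt₁.trans hs.1, hs.2⟩
        have hWint : IntervalIntegrable W volume x t₂ :=
          ((hWc.mono (Set.Icc_subset_Icc hxt₁ le_rfl)).mono
            (by rw [Set.uIcc_of_le hx.2.le] : Set.uIcc x t₂ ⊆ Set.Icc x t₂)).intervalIntegrable
        have hint1 : ∫ s in x..t₂, (W s - W t₂) = -v x - (t₂ - x) * W t₂ := by
          rw [intervalIntegral.integral_sub hWint intervalIntegrable_const,
            intervalIntegral.integral_const, hvrep2 x hxI, hv0, smul_eq_mul]
          ring
        have hbnd : |-v x - (t₂ - x) * W t₂| ≤ κ * (t₂ - x) := by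
          rw [← hint1]
          have := intervalIntegral.norm_integral_le_of_norm_le_const (C := κ)
            (f := fun s => W s - W t₂) (a := x) (b := t₂) (fun s hs => by
              rw [Set.uIoc_of_le hx.2.le] at hs
              exact hWnear s ⟨hs.1.le, hs.2⟩)
          rwa [Real.norm_eq_abs, abs_of_nonneg (by linarith [hx.2.le] : (0:ℝ) ≤ t₂ - x)] at this
        have hWt₂ : |W t₂| = 2 * κ := by rw [hκdef]; ring
        have hlow : κ * (t₂ - x) ≤ |v x| := by
          have h1 : |(t₂ - x) * W t₂| ≤ |(t₂ - x) * W t₂ + v x| + |v x| := by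
            have := abs_add_le ((t₂ - x) * W t₂ + v x) (-(v x))
            simpa using this
          have h1' : |-v x - (t₂ - x) * W t₂| = |(t₂ - x) * W t₂ + v x| := by
            rw [← abs_neg]
            congr 1
            ring
          rw [h1'] at hbnd
          have h2 : |(t₂ - x) * W t₂| = (t₂ - x) * (2 * κ) := by
            rw [abs_mul, abs_of_nonneg (by linarith [hx.2.le] : (0:ℝ) ≤ t₂ - x), hWt₂]
          nlinarith [hbnd, hx.2]
        have hvpos : 0 < |v x| := lt_of_lt_of_le (by nlinarith [hx.2]) hlow
        have hFabs : ‖F x‖ = |Q x| * |u x| ^ 2 / |v x| := by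
          simp only [hFdef, Real.norm_eq_abs, abs_div, abs_mul, abs_pow]
        rw [hFabs]
        calc |Q x| * |u x| ^ 2 / |v x| ≤ MQ * (MU * (t₂ - x)) ^ 2 / (κ * (t₂ - x)) := by
              apply div_le_div₀ (by positivity) ?_ (by nlinarith [hx.2]) hlow
              have b1 : |Q x| ≤ MQ := by simpa using hMQ x hxI
              have b2 : |u x| ^ 2 ≤ (MU * (t₂ - x)) ^ 2 :=
                pow_le_pow_left₀ (abs_nonneg _) (hubd2 x hxI) 2
              exact mul_le_mul b1 b2 (by positivity) hMQ0
          _ = MQ * MU ^ 2 / κ * (t₂ - x) := by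
              rw [div_eq_iff (ne_of_gt (by nlinarith [hx.2] : (0:ℝ) < κ * (t₂ - x))),
                div_mul_eq_mul_div, div_mul_eq_mul_div, eq_div_iff (ne_of_gt hκpos)]
              ring
      have htd : Filter.Tendsto (fun x => (MQ * MU ^ 2 / κ) * (t₂ - x))
          (nhdsWithin t₂ (Set.Iio t₂)) (nhds 0) := by
        have hc : Continuous fun x : ℝ => (MQ * MU ^ 2 / κ) * (t₂ - x) :=
          continuous_const.mul (continuous_const.sub continuous_id)
        have := (hc.tendsto t₂).mono_left (nhdsWithin_le_nhds (s := Set.Iio t₂))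
        simpa using this
      exact squeeze_zero_norm' hevb htd
    · have hmemI : t₂ ∈ Set.Icc t₁ t₂ := ⟨hle, le_rfl⟩
      have h1 : ContinuousWithinAt (fun x => Q x * u x ^ 2) (Set.Icc t₁ t₂) t₂ :=
        ((hQc t₂ hmemI).mul ((huc t₂ hmemI).pow 2))
      have hFcw : ContinuousWithinAt F (Set.Icc t₁ t₂) t₂ := h1.div (hvc t₂ hmemI) hv0
      have hF0 : F t₂ = 0 := by simp [hFdef, hu₂]
      have ht' := hFcw.tendsto
      rw [hF0] at ht'
      have hle' : nhdsWithin t₂ (Set.Iio t₂) ≤ nhdsWithin t₂ (Set.Icc t₁ t₂) := by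
        rw [← nhdsWithin_Ico_eq_nhdsLT ht]
        exact nhdsWithin_mono t₂ Set.Ico_subset_Icc_self
      exact ht'.mono_left hle'
  
  -- Main claim: the Picone quantity vanishes identically
  have hC1 : ∀ x ∈ Set.Ioo t₁ t₂, U x * v x - u x * W x = 0 := by
    by_contra hC
    push_neg at hC
    obtain ⟨x₀, hx₀, hx₀ne⟩ := hC
    have hvx₀ : v x₀ ≠ 0 := hcon x₀ hx₀
    have hgpos : 0 < g x₀ := by
      simp only [hgdef]
      apply div_pos
      · exact mul_pos (hp₁pos x₀ (Set.Ioo_subset_Icc_self hx₀))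
          (lt_of_le_of_ne (sq_nonneg _) (Ne.symm (pow_ne_zero 2 hx₀ne)))
      · exact lt_of_le_of_ne (sq_nonneg _) (Ne.symm (pow_ne_zero 2 hvx₀))
    have hnhds : {y | y ∈ Set.Ioo t₁ t₂ ∧ g x₀ / 2 < g y} ∈ nhds x₀ := by
      have h1 : Set.Ioo t₁ t₂ ∈ nhds x₀ := Ioo_mem_nhds hx₀.1 hx₀.2
      have h2 : {y | g x₀ / 2 < g y} ∈ nhds x₀ :=
        (hgca x₀ hx₀) (Ioi_mem_nhds (by linarith))
      exact Filter.inter_mem h1 h2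
    obtain ⟨ε, hε, hball⟩ := Metric.mem_nhds_iff.1 hnhds
    set a : ℝ := x₀ - ε/2 with hadef
    set b : ℝ := x₀ + ε/2 with hbdef
    have hab : a ≤ b := by rw [hadef, hbdef]; linarith
    have hsubab : Set.Icc a b ⊆ {y | y ∈ Set.Ioo t₁ t₂ ∧ g x₀ / 2 < g y} := by
      intro y hy
      apply hball
      rw [Metric.mem_ball, Real.dist_eq, abs_lt]
      have h1 := hy.1
      have h2 := hy.2
      rw [hadef] at h1
      rw [hbdef] at h2
      constructor <;> linarith
    have hIccab : Set.Icc a b ⊆ Set.Ioo t₁ t₂ := fun y hy => (hsubab hy).1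
    have hgcab : ContinuousOn g (Set.Icc a b) :=
      fun y hy => (hgca y (hIccab hy)).continuousWithinAt
    have hgintab : IntervalIntegrable g volume a b :=
      (hgcab.mono (by rw [Set.uIcc_of_le hab] : Set.uIcc a b ⊆ Set.Icc a b)).intervalIntegrable
    set δ : ℝ := g x₀ / 2 * (b - a) with hδdef
    have hba : b - a = ε := by rw [hadef, hbdef]; ring
    have hδpos : 0 < δ := by rw [hδdef, hba]; positivity
    have hδa : δ ≤ ∫ y in a..b, g y := by
      have h := intervalIntegral.integral_mono_on (f := fun _ => g x₀ / 2) hab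
        intervalIntegrable_const hgintab (fun y hy => (hsubab hy).2.le)
      rw [intervalIntegral.integral_const, smul_eq_mul, mul_comm] at h
      rw [hδdef]
      exact h
    have ht₁a : t₁ < a := (hIccab (Set.left_mem_Icc.2 hab)).1
    have hbt₂ : b < t₂ := (hIccab (Set.right_mem_Icc.2 hab)).2
    have hFabs₁ : Filter.Tendsto (fun x => |F x|) (nhdsWithin t₁ (Set.Ioi t₁)) (nhds 0) := by
      simpa using hFt₁.abs
    have hFabs₂ : Filter.Tendsto (fun x => |F x|) (nhdsWithin t₂ (Set.Iio t₂)) (nhds 0) := by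
      simpa using hFt₂.abs
    have ev1 : ∀ᶠ x in nhdsWithin t₁ (Set.Ioi t₁), x ∈ Set.Ioc t₁ a :=
      Ioc_mem_nhdsGT_of_mem ⟨le_rfl, ht₁a⟩
    have ev2 : ∀ᶠ x in nhdsWithin t₁ (Set.Ioi t₁), |F x| < δ/8 :=
      hFabs₁.eventually_lt_const (by positivity)
    have ev3 : ∀ᶠ x in nhdsWithin t₁ (Set.Ioi t₁), M * (x - t₁) < δ/8 := by
      have htd : Filter.Tendsto (fun x => M * (x - t₁)) (nhdsWithin t₁ (Set.Ioi t₁)) (nhds 0) := by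
        have hc : Continuous fun x : ℝ => M * (x - t₁) :=
          continuous_const.mul (continuous_id.sub continuous_const)
        simpa using (hc.tendsto t₁).mono_left (nhdsWithin_le_nhds (s := Set.Ioi t₁))
      exact htd.eventually_lt_const (by positivity)
    obtain ⟨a', ha'1, ha'F, ha'M⟩ := (ev1.and (ev2.and ev3)).exists
    have ev1' : ∀ᶠ x in nhdsWithin t₂ (Set.Iio t₂), x ∈ Set.Ico b t₂ :=
      Ico_mem_nhdsLT_of_mem ⟨hbt₂, le_rfl⟩
    have ev2' : ∀ᶠ x in nhdsWithin t₂ (Set.Iio t₂), |F x| < δ/8 :=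
      hFabs₂.eventually_lt_const (by positivity)
    have ev3' : ∀ᶠ x in nhdsWithin t₂ (Set.Iio t₂), M * (t₂ - x) < δ/8 := by
      have htd : Filter.Tendsto (fun x => M * (t₂ - x)) (nhdsWithin t₂ (Set.Iio t₂)) (nhds 0) := by
        have hc : Continuous fun x : ℝ => M * (t₂ - x) :=
          continuous_const.mul (continuous_const.sub continuous_id)
        simpa using (hc.tendsto t₂).mono_left (nhdsWithin_le_nhds (s := Set.Iio t₂))
      exact htd.eventually_lt_const (by positivity)
    obtain ⟨b', hb'1, hb'F, hb'M⟩ := (ev1'.and (ev2'.and ev3')).exists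
    have ha'I : a' ∈ Set.Ioo t₁ t₂ := ⟨ha'1.1, lt_of_le_of_lt (ha'1.2.trans hab) hbt₂⟩
    have hb'I : b' ∈ Set.Ioo t₁ t₂ := ⟨lt_of_lt_of_le ht₁a (hab.trans hb'1.1), hb'1.2⟩
    have ha'b' : a' ≤ b' := le_trans ha'1.2 (hab.trans hb'1.1)
    have hsubI : Set.Icc a' b' ⊆ Set.Ioo t₁ t₂ :=
      fun y hy => ⟨lt_of_lt_of_le ha'I.1 hy.1, lt_of_le_of_lt hy.2 hb'I.2⟩
    have hFcab : ContinuousOn F (Set.Icc a' b') :=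
      fun y hy => ((hFd y (hsubI hy)).continuousAt).continuousWithinAt
    have hgcab' : ContinuousOn g (Set.Icc a' b') :=
      fun y hy => (hgca y (hsubI hy)).continuousWithinAt
    have hecab' : ContinuousOn e (Set.Icc a' b') :=
      hec.mono (fun y hy => Set.Ioo_subset_Icc_self (hsubI hy))
    have hFTC : ∫ y in a'..b', (e y - g y) = F b' - F a' :=
      my_ftc ha'b' hFcab (fun y hy => hFd y (hsubI (Set.Ioo_subset_Icc_self hy)))
        (hecab'.sub hgcab')
    have hint_e : IntervalIntegrable e volume a' b' :=
      (hecab'.mono (by rw [Set.uIcc_of_le ha'b'] : Set.uIcc a' b' ⊆ Set.Icc a' b')).intervalIntegrable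
    have hint_g : IntervalIntegrable g volume a' b' :=
      (hgcab'.mono (by rw [Set.uIcc_of_le ha'b'] : Set.uIcc a' b' ⊆ Set.Icc a' b')).intervalIntegrable
    have hsplitEG : ∫ y in a'..b', (e y - g y) = (∫ y in a'..b', e y) - ∫ y in a'..b', g y :=
      intervalIntegral.integral_sub hint_e hint_g
    have hgnn' : ∀ y ∈ Set.Icc a' b', 0 ≤ g y :=
      fun y hy => hgnn y (Set.Ioo_subset_Icc_self (hsubI hy))
    have hint_g1 : IntervalIntegrable g volume a' a :=
      ((hgcab'.mono (Set.Icc_subset_Icc le_rfl (hab.trans hb'1.1))).mono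
        (by rw [Set.uIcc_of_le ha'1.2] : Set.uIcc a' a ⊆ Set.Icc a' a)).intervalIntegrable
    have hint_g3 : IntervalIntegrable g volume b b' :=
      ((hgcab'.mono (Set.Icc_subset_Icc (ha'1.2.trans hab) le_rfl)).mono
        (by rw [Set.uIcc_of_le hb'1.1] : Set.uIcc b b' ⊆ Set.Icc b b')).intervalIntegrable
    have e1 := intervalIntegral.integral_add_adjacent_intervals hint_g1 hgintab
    have e2 := intervalIntegral.integral_add_adjacent_intervals (hint_g1.trans hgintab) hint_g3
    have nn1 : 0 ≤ ∫ y in a'..a, g y :=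
      intervalIntegral.integral_nonneg ha'1.2
        (fun y hy => hgnn' y ⟨hy.1, hy.2.trans (hab.trans hb'1.1)⟩)
    have nn3 : 0 ≤ ∫ y in b..b', g y :=
      intervalIntegral.integral_nonneg hb'1.1
        (fun y hy => hgnn' y ⟨(ha'1.2.trans hab).trans hy.1, hy.2⟩)
    have hint_e_left : IntervalIntegrable e volume t₁ a' :=
      ((hec.mono (Set.Icc_subset_Icc le_rfl ha'I.2.le)).mono
        (by rw [Set.uIcc_of_le ha'I.1.le] : Set.uIcc t₁ a' ⊆ Set.Icc t₁ a')).intervalIntegrable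
    have hint_e_right : IntervalIntegrable e volume b' t₂ :=
      ((hec.mono (Set.Icc_subset_Icc hb'I.1.le le_rfl)).mono
        (by rw [Set.uIcc_of_le hb'I.2.le] : Set.uIcc b' t₂ ⊆ Set.Icc b' t₂)).intervalIntegrable
    have s1 := intervalIntegral.integral_add_adjacent_intervals hint_e_left hint_e
    have s2 := intervalIntegral.integral_add_adjacent_intervals (hint_e_left.trans hint_e) hint_e_right
    have tb1 : |∫ y in t₁..a', e y| ≤ M * (a' - t₁) := by
      have := intervalIntegral.norm_integral_le_of_norm_le_const (C := M) (f := e)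
        (a := t₁) (b := a') (fun s hs => by
          rw [Set.uIoc_of_le ha'I.1.le] at hs
          exact hM s ⟨hs.1.le, hs.2.trans ha'I.2.le⟩)
      rwa [Real.norm_eq_abs, abs_of_nonneg (by linarith [ha'I.1] : (0:ℝ) ≤ a' - t₁)] at this
    have tb2 : |∫ y in b'..t₂, e y| ≤ M * (t₂ - b') := by
      have := intervalIntegral.norm_integral_le_of_norm_le_const (C := M) (f := e)
        (a := b') (b := t₂) (fun s hs => by
          rw [Set.uIoc_of_le hb'I.2.le] at hs
          exact hM s ⟨hb'I.1.le.trans hs.1.le, hs.2⟩)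
      rwa [Real.norm_eq_abs, abs_of_nonneg (by linarith [hb'I.2] : (0:ℝ) ≤ t₂ - b')] at this
    have habs1 := abs_lt.1 (lt_of_le_of_lt tb1 ha'M)
    have habs2 := abs_lt.1 (lt_of_le_of_lt tb2 hb'M)
    have hFa' := abs_lt.1 ha'F
    have hFb' := abs_lt.1 hb'F
    linarith [hδa, e1, e2, nn1, nn3, hFTC, hsplitEG, s1, s2, hJle,
      habs1.2, habs2.2, hFa'.2, hFb'.1, hδpos]
  
  -- the ratio u/v is constant on the open interval
  have hmid : (t₁ + t₂) / 2 ∈ Set.Ioo t₁ t₂ := ⟨by linarith, by linarith⟩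
  set c : ℝ := u ((t₁ + t₂) / 2) / v ((t₁ + t₂) / 2) with hcdef
  have hratio : ∀ x ∈ Set.Ioo t₁ t₂, u x = c * v x := by
    intro x hx
    set m : ℝ := (t₁ + t₂) / 2 with hmdef
    have hmm : Set.Icc (min x m) (max x m) ⊆ Set.Ioo t₁ t₂ := by
      intro y hy
      constructor
      · exact lt_of_lt_of_le (lt_min hx.1 hmid.1) hy.1
      · exact lt_of_le_of_lt hy.2 (max_lt hx.2 hmid.2)
    have hφd : ∀ y ∈ Set.Icc (min x m) (max x m), HasDerivAt (fun t => u t / v t) 0 y := by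
      intro y hy
      have hy' := hmm hy
      have h1 := (hudI y hy').div (hvdI y hy') (hcon y hy')
      rw [hC1 y hy', zero_div] at h1
      exact h1
    have hφc : ContinuousOn (fun t => u t / v t) (Set.Icc (min x m) (max x m)) :=
      fun y hy => ((hφd y hy).continuousAt).continuousWithinAt
    have hconst := constant_of_has_deriv_right_zero hφc
      (fun y hy => ((hφd y (Set.Ico_subset_Icc_self hy)).hasDerivWithinAt))
    have h1 := hconst x ⟨min_le_left _ _, le_max_left _ _⟩
    have h2 := hconst m ⟨min_le_right _ _, le_max_right _ _⟩
    have h3 : u x / v x = u m / v m := by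
      have := h1.trans h2.symm
      simpa using this
    exact (div_eq_iff (hcon x hx)).1 (h3.trans hcdef.symm)
  have hratioI : ∀ x ∈ Set.Icc t₁ t₂, u x = c * v x := by
    have hneBot₁ : (nhdsWithin t₁ (Set.Ioo t₁ t₂)).NeBot := by
      rw [← mem_closure_iff_nhdsWithin_neBot, closure_Ioo ht.ne]
      exact ⟨le_rfl, hle⟩
    have hneBot₂ : (nhdsWithin t₂ (Set.Ioo t₁ t₂)).NeBot := by
      rw [← mem_closure_iff_nhdsWithin_neBot, closure_Ioo ht.ne]
      exact ⟨hle, le_rfl⟩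
    have hdc : ContinuousOn (fun t => u t - c * v t) (Set.Icc t₁ t₂) :=
      huc.sub (continuousOn_const.mul hvc)
    have key : ∀ x ∈ Set.Icc t₁ t₂, u x - c * v x = 0 := by
      intro x hx
      rcases eq_or_lt_of_le hx.1 with h1 | h1
      · have l1 : Filter.Tendsto (fun t => u t - c * v t) (nhdsWithin t₁ (Set.Ioo t₁ t₂))
            (nhds (u t₁ - c * v t₁)) :=
          ((hdc t₁ ⟨le_rfl, hle⟩).mono Set.Ioo_subset_Icc_self).tendsto
        have l2 : Filter.Tendsto (fun t => u t - c * v t) (nhdsWithin t₁ (Set.Ioo t₁ t₂))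
            (nhds 0) := by
          apply Filter.Tendsto.congr' _ tendsto_const_nhds
          filter_upwards [self_mem_nhdsWithin] with y hy
          rw [hratio y hy]
          ring
        rw [← h1]
        exact (tendsto_nhds_unique l1 l2)
      rcases eq_or_lt_of_le hx.2 with h2 | h2
      · have l1 : Filter.Tendsto (fun t => u t - c * v t) (nhdsWithin t₂ (Set.Ioo t₁ t₂))
            (nhds (u t₂ - c * v t₂)) :=
          ((hdc t₂ ⟨hle, le_rfl⟩).mono Set.Ioo_subset_Icc_self).tendsto
        have l2 : Filter.Tendsto (fun t => u t - c * v t) (nhdsWithin t₂ (Set.Ioo t₁ t₂))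
            (nhds 0) := by
          apply Filter.Tendsto.congr' _ tendsto_const_nhds
          filter_upwards [self_mem_nhdsWithin] with y hy
          rw [hratio y hy]
          ring
        rw [h2]
        exact (tendsto_nhds_unique l1 l2)
      · rw [hratio x ⟨h1, h2⟩]
        ring
    intro x hx
    have := key x hx
    linarith
  by_cases hc0 : c = 0
  · obtain ⟨t0, ht0, hut0⟩ := hunt
    exact hut0 (by rw [hratioI t0 ht0, hc0, zero_mul])
  · apply hvu
    refine ⟨c⁻¹, fun t ht' => ?_⟩
    rw [hratioI t ht']
    rw [inv_mul_cancel_left₀ hc0]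
end

section
/- Let Ω ⊆ ℝᵐ be open, let M : Ω → ℝ^{m×m} be a differentiable matrix-valued function with M(x) symmetric for every x ∈ Ω, and let u, v : Ω → ℝ be twice differentiable with v(x) ≠ 0 for all x ∈ Ω. Then at every point of Ω the following Picone-type identity holds: Σ_{i,j} M_{ij} (v D_i(u/v))(v D_j(u/v)) + Σ_i D_i( u² (1/v) Σ_j M_{ij} D_j v ) = Σ_{i,j} M_{ij} D_i u D_j u + (u²/v) Σ_i D_i( Σ_j M_{ij} D_j v ). -/
/-- The `i`-th partial derivative of `f : ℝᵐ → ℝ` at `x`. -/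
noncomputable def pd {m : ℕ} (i : Fin m) (f : (Fin m → ℝ) → ℝ) (x : Fin m → ℝ) : ℝ :=
  fderiv ℝ f x (Pi.single i 1)

lemma pd_mul {m : ℕ} (i : Fin m) {f g : (Fin m → ℝ) → ℝ} {x : Fin m → ℝ}
    (hf : DifferentiableAt ℝ f x) (hg : DifferentiableAt ℝ g x) :
    pd i (fun z => f z * g z) x = pd i f x * g x + f x * pd i g x := by
  simp only [pd, fderiv_fun_mul hf hg]
  simp only [ContinuousLinearMap.add_apply, ContinuousLinearMap.smul_apply, smul_eq_mul]
  ring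

lemma pd_inv {m : ℕ} (i : Fin m) {f : (Fin m → ℝ) → ℝ} {x : Fin m → ℝ}
    (hf : DifferentiableAt ℝ f x) (hne : f x ≠ 0) :
    pd i (fun z => (f z)⁻¹) x = -(pd i f x) / f x ^ 2 := by
  have h := ((hasFDerivAt_inv hne).comp x hf.hasFDerivAt).fderiv
  rw [show (fun z => (f z)⁻¹) = (fun y : ℝ => y⁻¹) ∘ f from rfl]
  simp only [pd, h, ContinuousLinearMap.coe_comp', Function.comp_apply,
    ContinuousLinearMap.smulRight_apply, ContinuousLinearMap.one_apply, smul_eq_mul,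
    ContinuousLinearMap.toSpanSingleton_apply]
  field_simp


lemma picone_alg {m : ℕ} (K : Matrix (Fin m) (Fin m) ℝ) (hK : ∀ i j, K i j = K j i)
    (a b q : Fin m → ℝ) (c d : ℝ) (hd : d ≠ 0) :
    (∑ i, ∑ j, K i j * (d * (a i * d⁻¹ + c * (-b i / d ^ 2)))
        * (d * (a j * d⁻¹ + c * (-b j / d ^ 2))))
    + (∑ i, (((a i * c + c * a i) * d⁻¹ + c * c * (-b i / d ^ 2)) * (∑ j, K i j * b j)
        + c * c * d⁻¹ * q i))
    = (∑ i, ∑ j, K i j * a i * a j) + c * c / d * ∑ i, q i := by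
  have swap : (∑ i, ∑ j, K i j * a i * b j) = ∑ i, ∑ j, K i j * b i * a j := by
    rw [Finset.sum_comm]
    exact Finset.sum_congr rfl fun i _ => Finset.sum_congr rfl fun j _ => by rw [hK j i]; ring
  have hb : ∀ i, d * (a i * d⁻¹ + c * (-b i / d ^ 2)) = a i - c / d * b i := by
    intro i; field_simp; ring
  simp only [hb, Finset.mul_sum]
  rw [Finset.sum_add_distrib]
  have hq : ∀ i : Fin m, c * c * d⁻¹ * q i = c * c / d * q i := by
    intro i; rw [div_eq_mul_inv]
  simp only [hq]
  have core : (∑ i, ∑ j, K i j * (a i - c / d * b i) * (a j - c / d * b j))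
      + (∑ i, ∑ j, ((a i * c + c * a i) * d⁻¹ + c * c * (-b i / d ^ 2)) * (K i j * b j))
      = ∑ i, ∑ j, K i j * a i * a j := by
    rw [← Finset.sum_add_distrib]
    simp only [← Finset.sum_add_distrib]
    have per : ∀ i j, K i j * (a i - c / d * b i) * (a j - c / d * b j)
        + ((a i * c + c * a i) * d⁻¹ + c * c * (-b i / d ^ 2)) * (K i j * b j)
        = K i j * a i * a j + ((c / d) * (K i j * a i * b j)
            - (c / d) * (K i j * b i * a j)) := by
      intro i j; field_simp; ring
    simp only [per]
    simp only [Finset.sum_add_distrib, Finset.sum_sub_distrib, ← Finset.mul_sum]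
    rw [swap]; ring
  linarith [core]

/-- **Picone-type identity.** For a symmetric differentiable matrix field `M`,
twice differentiable `u, v` with `v ≠ 0` on an open set `Ω`, pointwise in `Ω`:
`Σ_{i,j} M_{ij} (v D_i(u/v))(v D_j(u/v)) + Σ_i D_i(u² (1/v) Σ_j M_{ij} D_j v)
  = Σ_{i,j} M_{ij} D_i u D_j u + (u²/v) Σ_i D_i(Σ_j M_{ij} D_j v)`. -/
theorem picone_identity {m : ℕ} (Ω : Set (Fin m → ℝ)) (hΩ : IsOpen Ω)
    (M : (Fin m → ℝ) → Matrix (Fin m) (Fin m) ℝ)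
    (hMdiff : ∀ i j, ∀ x ∈ Ω, DifferentiableAt ℝ (fun z => M z i j) x)
    (hMsymm : ∀ x ∈ Ω, (M x).IsSymm)
    (u v : (Fin m → ℝ) → ℝ)
    (hu : ∀ x ∈ Ω, DifferentiableAt ℝ u x)
    (hu' : ∀ i, ∀ x ∈ Ω, DifferentiableAt ℝ (fun z => pd i u z) x)
    (hv : ∀ x ∈ Ω, DifferentiableAt ℝ v x)
    (hv' : ∀ i, ∀ x ∈ Ω, DifferentiableAt ℝ (fun z => pd i v z) x)
    (hvne : ∀ x ∈ Ω, v x ≠ 0) :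
    ∀ x ∈ Ω,
      (∑ i, ∑ j, M x i j * (v x * pd i (fun z => u z / v z) x)
          * (v x * pd j (fun z => u z / v z) x))
        + (∑ i, pd i (fun z => (u z) ^ 2 * (1 / v z) * ∑ j, M z i j * pd j v z) x)
      = (∑ i, ∑ j, M x i j * pd i u x * pd j u x)
        + (u x) ^ 2 / v x * ∑ i, pd i (fun z => ∑ j, M z i j * pd j v z) x := by
  intro x hx
  have hux := hu x hx
  have hvx := hv x hx
  have hne := hvne x hx
  have hgd : ∀ i, DifferentiableAt ℝ (fun z => ∑ j, M z i j * pd j v z) x :=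
    fun i => DifferentiableAt.fun_sum fun j _ => (hMdiff i j x hx).fun_mul (hv' j x hx)
  simp only [one_div, pow_two]
  have hdiv : ∀ i : Fin m, pd i (fun z => u z / v z) x
      = pd i u x * (v x)⁻¹ + u x * (-(pd i v x) / v x ^ 2) := by
    intro i
    rw [show (fun z => u z / v z) = fun z => u z * (v z)⁻¹ by funext z; rw [div_eq_mul_inv]]
    rw [pd_mul i hux (hvx.fun_inv hne), pd_inv i hvx hne]
  have hquad : ∀ i : Fin m, pd i (fun z => u z * u z * (v z)⁻¹) x
      = (pd i u x * u x + u x * pd i u x) * (v x)⁻¹ + u x * u x * (-(pd i v x) / v x ^ 2) := by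
    intro i
    rw [pd_mul i (hux.fun_mul hux) (hvx.fun_inv hne), pd_mul i hux hux, pd_inv i hvx hne]
  have hbig : ∀ i : Fin m, pd i (fun z => u z * u z * (v z)⁻¹ * ∑ j, M z i j * pd j v z) x
      = ((pd i u x * u x + u x * pd i u x) * (v x)⁻¹ + u x * u x * (-(pd i v x) / v x ^ 2))
          * (∑ j, M x i j * pd j v x)
        + u x * u x * (v x)⁻¹ * pd i (fun z => ∑ j, M z i j * pd j v z) x := by
    intro i
    rw [pd_mul i ((hux.fun_mul hux).fun_mul (hvx.fun_inv hne)) (hgd i), hquad i]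
  simp only [hdiv, hbig]
  exact picone_alg (M x) (fun i j => ((hMsymm x hx).apply j i))
    (fun i => pd i u x) (fun i => pd i v x)
    (fun i => pd i (fun z => ∑ j, M z i j * pd j v z) x) (u x) (v x) hne
end
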